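/- arXiv:1001.4462 — 10 statements merged into one kernel-verified Lean document; each statement's English description precedes it below -/
import Mathlib

section
/- For every computably decidable set A of binary strings such that for every n the number of strings of length n in A is at least 2^n/3 (i.e., 3·|A ∩ {0,1}^n| ≥ 2^n), there exists an optimal plain decompressor whose domain is a subset of A. -/
open scoped Classical

/-- Complexity of `x` with respect to decompressor `D`: length of a shortest
`D`-description of `x`, or `⊤` if none exists. -/
noncomputable def Cpx (D : List Bool →. List Bool) (x : List Bool) : ℕ∞ :=
  sInf {n : ℕ∞ | ∃ y : List Bool, x ∈ D y ∧ (y.length : ℕ∞) = n}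

/-- A set of strings is prefix-free: no element is a proper prefix of another. -/
def PrefixFreeSet (S : Set (List Bool)) : Prop :=
  ∀ p ∈ S, ∀ q ∈ S, p <+: q → p = q

/-- `U` is an optimal plain decompressor. -/
def OptimalPlain (U : List Bool →. List Bool) : Prop :=
  Partrec U ∧ ∀ D : List Bool →. List Bool, Partrec D →
    ∃ c : ℕ, ∀ x : List Bool, Cpx U x ≤ Cpx D x + (c : ℕ∞)

/-- `V` is an optimal prefix-free decompressor. -/
def OptimalPrefix (V : List Bool →. List Bool) : Prop :=
  Partrec V ∧ PrefixFreeSet V.Dom ∧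
    ∀ D : List Bool →. List Bool, Partrec D → PrefixFreeSet D.Dom →
      ∃ c : ℕ, ∀ x : List Bool, Cpx V x ≤ Cpx D x + (c : ℕ∞)

namespace Stmt2Aux


/-- Value of a bit string read MSB-first, continuing from accumulator. -/
def natFold (n : ℕ) (l : List Bool) : ℕ := l.foldl (fun n b => 2 * n + b.toNat) n

def natOfStr (l : List Bool) : ℕ := natFold 0 l

/-- Iteratively peel `m` low-order bits of `j`, consing each extracted bit. -/
def strA (m j : ℕ) : ℕ × List Bool :=
  Nat.rec (j, ([] : List Bool))
    (fun _ st => (st.1 / 2, (decide (st.1 % 2 = 1)) :: st.2)) m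

def strOfNat (m j : ℕ) : List Bool := (strA m j).2

lemma strA_zero (j : ℕ) : strA 0 j = (j, []) := rfl

lemma strA_succ (m j : ℕ) :
    strA (m + 1) j = ((strA m j).1 / 2, (decide ((strA m j).1 % 2 = 1)) :: (strA m j).2) := rfl

lemma natFold_cons (n : ℕ) (b : Bool) (t : List Bool) :
    natFold n (b :: t) = natFold (2 * n + b.toNat) t := rfl

lemma strA_natFold : ∀ (t : List Bool) (n : ℕ), strA t.length (natFold n t) = (n, t) := by
  intro t
  induction t with
  | nil => intro n; rfl
  | cons b t ih =>
    intro n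
    have h : strA (t.length + 1) (natFold n (b :: t)) =
        ((2 * n + b.toNat) / 2, (decide ((2 * n + b.toNat) % 2 = 1)) :: t) := by
      rw [natFold_cons, strA_succ, ih]
    rw [show (b :: t).length = t.length + 1 from rfl, h]
    cases b with
    | false =>
      simp only [Bool.toNat_false, Nat.add_zero]
      have h1 : 2 * n / 2 = n := by omega
      have h2 : decide ((2 * n) % 2 = 1) = false := by simp
      rw [h1, h2]
    | true =>
      simp only [Bool.toNat_true]
      have h1 : (2 * n + 1) / 2 = n := by omega
      have h2 : decide ((2 * n + 1) % 2 = 1) = true := by simp only [decide_eq_true_eq]; omega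
      rw [h1, h2]

lemma strOfNat_natOfStr (l : List Bool) : strOfNat l.length (natOfStr l) = l := by
  have := strA_natFold l 0
  simp [strOfNat, natOfStr, this]

lemma length_strOfNat (m j : ℕ) : (strOfNat m j).length = m := by
  induction m with
  | zero => rfl
  | succ m ih => simp [strOfNat, strA_succ] at ih ⊢; exact ih

lemma natFold_lt : ∀ (t : List Bool) (n : ℕ), natFold n t < (n + 1) * 2 ^ t.length := by
  intro t
  induction t with
  | nil => intro n; simp [natFold]
  | cons b t ih =>
    intro n
    rw [natFold_cons]
    calc natFold (2 * n + b.toNat) t < (2 * n + b.toNat + 1) * 2 ^ t.length := ih _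
      _ ≤ ((n + 1) * 2) * 2 ^ t.length := by
          have : 2 * n + b.toNat + 1 ≤ (n + 1) * 2 := by cases b <;> simp <;> omega
          exact Nat.mul_le_mul_right _ this
      _ = (n + 1) * 2 ^ (b :: t).length := by
          rw [show (b :: t).length = t.length + 1 from rfl, pow_succ]; ring

lemma natOfStr_lt (l : List Bool) : natOfStr l < 2 ^ l.length := by
  simpa [natOfStr] using natFold_lt l 0

lemma strA_fst (m j : ℕ) : (strA m j).1 = j / 2 ^ m := by
  induction m with
  | zero => simp [strA_zero]
  | succ m ih => rw [strA_succ, ih, pow_succ, Nat.div_div_eq_div_mul]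

lemma natFold_strA (m j : ℕ) : natFold (strA m j).1 (strA m j).2 = j := by
  induction m with
  | zero => rfl
  | succ m ih =>
    rw [strA_succ, natFold_cons]
    have h2 : 2 * ((strA m j).1 / 2) + (decide ((strA m j).1 % 2 = 1)).toNat = (strA m j).1 := by
      rcases Nat.mod_two_eq_zero_or_one (strA m j).1 with h | h <;> simp [h] <;> omega
    rw [h2, ih]

lemma natOfStr_strOfNat {m j : ℕ} (h : j < 2 ^ m) : natOfStr (strOfNat m j) = j := by
  have h1 := natFold_strA m j
  have h0 : (strA m j).1 = 0 := by rw [strA_fst]; exact Nat.div_eq_of_lt h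
  rw [h0] at h1
  exact h1




theorem hstrP : Primrec fun p : ℕ × ℕ => strOfNat p.1 p.2 := by
  have d1 : Primrec fun x : ℕ × (ℕ × (ℕ × List Bool)) => x.2.2.1 :=
    Primrec.fst.comp (Primrec.snd.comp Primrec.snd)
  have hg : Primrec₂ fun (_ : ℕ) (q : ℕ × (ℕ × List Bool)) =>
      (q.2.1 / 2, (decide (q.2.1 % 2 = 1)) :: q.2.2) := by
    apply Primrec.to₂ (f := fun x : ℕ × (ℕ × (ℕ × List Bool)) =>
      (x.2.2.1 / 2, (decide (x.2.2.1 % 2 = 1)) :: x.2.2.2))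
    apply Primrec.pair
    · exact Primrec.nat_div.comp d1 (Primrec.const 2)
    · exact Primrec.list_cons.comp
        (Primrec.eq.comp (Primrec.nat_mod.comp d1 (Primrec.const 2)) (Primrec.const 1)).decide
        (Primrec.snd.comp (Primrec.snd.comp Primrec.snd))
  have h1 := Primrec.nat_rec (Primrec.pair Primrec.id (Primrec.const ([] : List Bool))) hg
  exact (Primrec.snd.comp (h1.comp Primrec.snd Primrec.fst)).of_eq fun p => rfl

theorem hnatP : Primrec natOfStr := by
  have h : Primrec₂ fun (_ : List Bool) (p : ℕ × Bool) => 2 * p.1 + p.2.toNat := by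
    apply Primrec.to₂ (f := fun x : List Bool × (ℕ × Bool) => 2 * x.2.1 + x.2.2.toNat)
    apply Primrec.nat_add.comp
    · exact Primrec.nat_mul.comp (Primrec.const 2) (Primrec.fst.comp Primrec.snd)
    · exact Primrec.cond (Primrec.snd.comp Primrec.snd) (Primrec.const 1) (Primrec.const 0)
  exact (Primrec.list_foldl Primrec.id (Primrec.const 0) h).of_eq fun l => rfl
attribute [irreducible] strOfNat natOfStr natFold strA

/-- Number of `j < k` with `χ (strOfNat m j) = true`. -/
noncomputable def cnt (χ : List Bool → Bool) (m k : ℕ) : ℕ :=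
  Nat.rec 0 (fun j c => c + (bif χ (strOfNat m j) then 1 else 0)) k

lemma cnt_zero (χ : List Bool → Bool) (m : ℕ) : cnt χ m 0 = 0 := rfl

lemma cnt_succ (χ : List Bool → Bool) (m k : ℕ) :
    cnt χ m (k + 1) = cnt χ m k + (bif χ (strOfNat m k) then 1 else 0) := rfl

lemma cnt_eq_card (χ : List Bool → Bool) (m k : ℕ) :
    cnt χ m k = ((Finset.range k).filter fun j => χ (strOfNat m j) = true).card := by
  induction k with
  | zero => simp [cnt_zero]
  | succ k ih =>
    rw [cnt_succ, ih, Finset.range_add_one, Finset.filter_insert]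
    by_cases h : χ (strOfNat m k) = true
    · rw [if_pos h, Finset.card_insert_of_notMem (by simp), h]; simp
    · rw [if_neg h]
      have : χ (strOfNat m k) = false := by revert h; cases χ (strOfNat m k) <;> simp
      simp [this]

lemma pick_exists (χ : List Bool → Bool) (m r : ℕ) :
    ∀ K, r < cnt χ m K → ∃ j, j < K ∧ χ (strOfNat m j) = true ∧ cnt χ m j = r := by
  intro K
  induction K with
  | zero => intro h; simp [cnt_zero] at h
  | succ K ih =>
    intro h
    by_cases h' : r < cnt χ m K
    · obtain ⟨j, h1, h2, h3⟩ := ih h'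
      exact ⟨j, Nat.lt_succ_of_lt h1, h2, h3⟩
    · push_neg at h'
      rw [cnt_succ] at h
      cases hb : χ (strOfNat m K) with
      | false => rw [hb] at h; simp at h; omega
      | true =>
        rw [hb] at h; simp at h
        exact ⟨K, Nat.lt_succ_self K, hb, by omega⟩

/-- The density bridge: `cnt` counts the strings of length `m` in `A`. -/
lemma ncard_eq_cnt (A : Set (List Bool)) (χ : List Bool → Bool)
    (hAχ : ∀ x, x ∈ A ↔ χ x = true) (m : ℕ) :
    ({x | x ∈ A ∧ x.length = m} : Set (List Bool)).ncard = cnt χ m (2 ^ m) := by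
  classical
  have hset : ({x | x ∈ A ∧ x.length = m} : Set (List Bool)) =
      (fun j => strOfNat m j) ''
        ↑((Finset.range (2 ^ m)).filter fun j => χ (strOfNat m j) = true) := by
    ext x
    simp only [Set.mem_setOf_eq, Set.mem_image, Finset.coe_filter, Finset.mem_range,
      Set.mem_setOf_eq]
    constructor
    · rintro ⟨hxA, hlen⟩
      refine ⟨natOfStr x, ⟨by simpa [hlen] using natOfStr_lt x, ?_⟩, by
        simpa [hlen] using strOfNat_natOfStr x⟩
      rw [show strOfNat m (natOfStr x) = x by simpa [hlen] using strOfNat_natOfStr x]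
      exact (hAχ x).1 hxA
    · rintro ⟨j, ⟨hj, hχ⟩, rfl⟩
      exact ⟨(hAχ _).2 hχ, length_strOfNat m j⟩
  have hinj : Set.InjOn (fun j => strOfNat m j)
      ↑((Finset.range (2 ^ m)).filter fun j => χ (strOfNat m j) = true) := by
    intro j hj j' hj' hjj
    simp only [Finset.coe_filter, Finset.mem_range, Set.mem_setOf_eq] at hj hj'
    have := congrArg natOfStr hjj
    rwa [natOfStr_strOfNat hj.1, natOfStr_strOfNat hj'.1] at this
  rw [hset, Set.ncard_image_of_injOn hinj, Set.ncard_coe_finset, cnt_eq_card]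

/-- Split a string `1^e 0 z` into `(e, z)`. -/
def splitU : List Bool → Option (ℕ × List Bool) :=
  fun l => l.rec none (fun b t ih =>
    bif b then ih.map (fun p => (p.1 + 1, p.2)) else some (0, t))

lemma splitU_spec (e : ℕ) (z : List Bool) :
    splitU (List.replicate e true ++ false :: z) = some (e, z) := by
  induction e with
  | zero => rfl
  | succ e ih =>
    rw [List.replicate_succ, List.cons_append]
    show (splitU (List.replicate e true ++ false :: z)).map (fun p => (p.1 + 1, p.2)) = _
    rw [ih]; rfl

/-- The universal plain decompressor. -/
def U0 : List Bool →. List Bool := fun y =>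
  ((splitU y : Option (ℕ × List Bool)) : Part (ℕ × List Bool)).bind fun p =>
    ((Denumerable.ofNat Nat.Partrec.Code p.1).eval (Encodable.encode p.2)).bind fun m =>
      ((Encodable.decode m : Option (List Bool)) : Part (List Bool))

theorem U0_partrec : Partrec U0 := by
  have hsplit : Primrec splitU := by
    have h : Primrec₂ (fun (_ : List Bool) (q : Bool × List Bool × Option (ℕ × List Bool)) =>
        bif q.1 then q.2.2.map (fun p => (p.1 + 1, p.2)) else some (0, q.2.1)) := by
      apply Primrec.cond (Primrec.fst.comp Primrec.snd)
      · exact Primrec.option_map (Primrec.snd.comp (Primrec.snd.comp Primrec.snd))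
          ((Primrec.pair (Primrec.succ.comp (Primrec.fst.comp Primrec.snd))
            (Primrec.snd.comp Primrec.snd)).to₂)
      · exact Primrec.option_some.comp
          (Primrec.pair (Primrec.const 0) (Primrec.fst.comp (Primrec.snd.comp Primrec.snd)))
    exact (Primrec.list_rec Primrec.id (Primrec.const none) h).of_eq fun l => rfl
  apply Partrec.bind (Computable.ofOption hsplit.to_comp)
  apply Partrec.bind
  · exact Nat.Partrec.Code.eval_part.comp
      ((Computable.ofNat _).comp (Computable.fst.comp Computable.snd))
      (Computable.encode.comp (Computable.snd.comp Computable.snd))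
  · exact (Computable.ofOption (Computable.decode.comp Computable.snd)).to₂

theorem U0_univ (D : List Bool →. List Bool) (hD : Partrec D) :
    ∃ c : ℕ, ∀ y x, x ∈ D y → ∃ y', x ∈ U0 y' ∧ y'.length ≤ y.length + c := by
  obtain ⟨cd, hcd⟩ := Nat.Partrec.Code.exists_code.1 hD
  refine ⟨Encodable.encode cd + 1, fun y x hx =>
    ⟨List.replicate (Encodable.encode cd) true ++ false :: y, ?_, by simp; omega⟩⟩
  have h1 : Encodable.encode x ∈
      (Denumerable.ofNat Nat.Partrec.Code (Encodable.encode cd)).eval (Encodable.encode y) := by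
    rw [Denumerable.ofNat_encode, hcd]
    simp only [Encodable.encodek, Part.coe_some, Part.bind_some]
    exact Part.mem_map _ hx
  show x ∈ Part.bind _ _
  rw [splitU_spec]
  refine Part.mem_bind_iff.2 ⟨(Encodable.encode cd, y), by simp, ?_⟩
  refine Part.mem_bind_iff.2 ⟨Encodable.encode x, h1, by simp [Encodable.encodek]⟩

theorem cpx_le_of_mem {D : List Bool →. List Bool} {x y : List Bool} (h : x ∈ D y) :
    Cpx D x ≤ (y.length : ℕ∞) :=
  sInf_le ⟨y, h, rfl⟩

theorem cpx_le_add {U D : List Bool →. List Bool} {c : ℕ}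
    (H : ∀ y x, x ∈ D y → ∃ y', x ∈ U y' ∧ y'.length ≤ y.length + c) (x : List Bool) :
    Cpx U x ≤ Cpx D x + (c : ℕ∞) := by
  by_cases hx : ∃ y, x ∈ D y
  · set T := {k : ℕ | ∃ y, x ∈ D y ∧ y.length = k} with hTdef
    obtain ⟨yw, hyw⟩ := hx
    have hT : T.Nonempty := ⟨yw.length, yw, hyw, rfl⟩
    obtain ⟨y0, hy0, hl0⟩ := Nat.sInf_mem hT
    have hk : ((sInf T : ℕ) : ℕ∞) ≤ Cpx D x := by
      apply le_sInf
      rintro b ⟨y, hy, rfl⟩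
      have hmem : y.length ∈ T := ⟨y, hy, rfl⟩
      exact_mod_cast Nat.sInf_le hmem
    obtain ⟨y', hy', hlen⟩ := H y0 x hy0
    calc Cpx U x ≤ (y'.length : ℕ∞) := cpx_le_of_mem hy'
      _ ≤ ((y0.length + c : ℕ) : ℕ∞) := by exact_mod_cast hlen
      _ = ((sInf T : ℕ) : ℕ∞) + c := by rw [hl0]; push_cast; ring
      _ ≤ Cpx D x + c := add_le_add_left hk _
  · have hempty : {n : ℕ∞ | ∃ y : List Bool, x ∈ D y ∧ (y.length : ℕ∞) = n} = ∅ := by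
      ext b; simp only [Set.mem_setOf_eq, Set.mem_empty_iff_false, iff_false]
      rintro ⟨y, hy, _⟩; exact hx ⟨y, hy⟩
    have : Cpx D x = ⊤ := by rw [Cpx, hempty, sInf_empty]
    rw [this, top_add]
    exact le_top

/-- The re-encoder into `A`. -/
noncomputable def reenc (χ : List Bool → Bool) (y' : List Bool) : Option (List Bool) :=
  bif χ y' then some (strOfNat (y'.length - 2) (cnt χ y'.length (natOfStr y'))) else none

theorem cnt_computable {χ : List Bool → Bool} (hχ : Computable χ) :
    Computable fun p : ℕ × ℕ => cnt χ p.1 p.2 := by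
  have h : Computable₂ fun (p : ℕ × ℕ) (q : ℕ × ℕ) =>
      q.2 + (bif χ (strOfNat p.1 q.1) then 1 else 0) := by
    apply Computable₂.mk
    apply Primrec.nat_add.to_comp.comp (Computable.snd.comp Computable.snd)
    apply Computable.cond
    · exact hχ.comp (hstrP.to_comp.comp
        (Computable.pair (Computable.fst.comp Computable.fst)
          (Computable.fst.comp Computable.snd)))
    · exact Computable.const 1
    · exact Computable.const 0
  exact (Computable.nat_rec Computable.snd (Computable.const 0) h).of_eq fun p => rfl

attribute [irreducible] cnt

lemma reenc_eq (χ : List Bool → Bool) (y' : List Bool) :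
    reenc χ y' = (bif χ y' then
      some (strOfNat (y'.length - 2) (cnt χ y'.length (natOfStr y'))) else none) := rfl

attribute [irreducible] reenc

theorem reenc_computable {χ : List Bool → Bool} (hχ : Computable χ) :
    Computable (reenc χ) := by
  have hlen : Computable fun y' : List Bool => y'.length := Primrec.list_length.to_comp
  have hstr2 : Computable₂ strOfNat := Computable₂.mk hstrP.to_comp
  have hcnt2 : Computable₂ (cnt χ) := Computable₂.mk (cnt_computable hχ)
  have hsub : Computable fun y' : List Bool => y'.length - 2 :=
    Primrec.nat_sub.to_comp.comp hlen (Computable.const 2)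
  have hmain : Computable fun y' : List Bool => (bif χ y' then
      some (strOfNat (y'.length - 2) (cnt χ y'.length (natOfStr y'))) else none) := by
    apply Computable.cond hχ
    · exact Computable.option_some.comp
        (hstr2.comp hsub (hcnt2.comp hlen hnatP.to_comp))
    · exact Computable.const none
  exact hmain.of_eq fun y' => (reenc_eq χ y').symm


end Stmt2Aux

theorem stmt2 (A : Set (List Bool)) (hA : ComputablePred (· ∈ A))
    (hdense : ∀ n : ℕ, 2 ^ n ≤ 3 * ({x | x ∈ A ∧ x.length = n} : Set (List Bool)).ncard) :
    ∃ U : List Bool →. List Bool, OptimalPlain U ∧ U.Dom ⊆ A := by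
  obtain ⟨χ, hχ, hAeq⟩ := ComputablePred.computable_iff.1 hA
  have hAχ : ∀ x, x ∈ A ↔ χ x = true := fun x => iff_of_eq (congrFun hAeq x)
  have hd : ∀ n, 2 ^ n ≤ 3 * Stmt2Aux.cnt χ n (2 ^ n) := fun n => by
    rw [← Stmt2Aux.ncard_eq_cnt A χ hAχ n]; exact hdense n
  have hdesc : ∀ y : List Bool,
      ∃ d : List Bool, Stmt2Aux.reenc χ d = some y ∧ d.length = y.length + 2 := by
    intro y
    have hr : Stmt2Aux.natOfStr y < 2 ^ y.length := Stmt2Aux.natOfStr_lt y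
    have hcnt' : Stmt2Aux.natOfStr y <
        Stmt2Aux.cnt χ (y.length + 2) (2 ^ (y.length + 2)) := by
      have h1 := hd (y.length + 2)
      have h4 : 2 ^ (y.length + 2) = 4 * 2 ^ y.length := by ring
      omega
    obtain ⟨j, hjlt, hχj, hcj⟩ :=
      Stmt2Aux.pick_exists χ (y.length + 2) (Stmt2Aux.natOfStr y) (2 ^ (y.length + 2)) hcnt'
    refine ⟨Stmt2Aux.strOfNat (y.length + 2) j, ?_, by rw [Stmt2Aux.length_strOfNat]⟩
    rw [Stmt2Aux.reenc_eq, Stmt2Aux.length_strOfNat, hχj, cond_true,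
      Stmt2Aux.natOfStr_strOfNat hjlt, hcj]
    have h2 : y.length + 2 - 2 = y.length := by omega
    rw [h2, Stmt2Aux.strOfNat_natOfStr y]
  refine ⟨fun y' => ((Stmt2Aux.reenc χ y' : Option (List Bool)) : Part (List Bool)).bind
    Stmt2Aux.U0, ⟨?_, ?_⟩, ?_⟩
  · exact Partrec.bind (Computable.ofOption (Stmt2Aux.reenc_computable hχ))
      (Stmt2Aux.U0_partrec.comp Computable.snd)
  · intro D hD
    obtain ⟨c0, hc0⟩ := Stmt2Aux.U0_univ D hD
    refine ⟨c0 + 2, fun x => Stmt2Aux.cpx_le_add ?_ x⟩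
    intro y x hxy
    obtain ⟨y1, hxy1, hlen1⟩ := hc0 y x hxy
    obtain ⟨dd, hd1, hd2⟩ := hdesc y1
    refine ⟨dd, ?_, by omega⟩
    show x ∈ Part.bind _ _
    rw [hd1]
    exact Part.mem_bind_iff.2 ⟨y1, by simp, hxy1⟩
  · intro y' hy'
    obtain ⟨v, hv⟩ := (PFun.mem_dom _ _).1 hy'
    obtain ⟨w, hw1, _⟩ := Part.mem_bind_iff.1 hv
    cases hcy : χ y' with
    | true => exact (hAχ y').2 hcy
    | false =>
      rw [show Stmt2Aux.reenc χ y' = none by rw [Stmt2Aux.reenc_eq, hcy]; rfl] at hw1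
      simp at hw1
end

section
/- For every computably decidable set A of binary strings such that for every n the number of strings of length n in A is at least 2^n/3 (i.e., 3·|A ∩ {0,1}^n| ≥ 2^n), there exists a total computable injective function a : List Bool → List Bool such that for every string p, a(p) ∈ A and the length of a(p) equals the length of p plus 2. -/
open scoped Classical

namespace Stmt3Aux

def allL : ℕ → List (List Bool)
  | 0 => [[]]
  | n+1 => ((allL n).map (false :: ·)) ++ ((allL n).map (true :: ·))

lemma mem_allL : ∀ {n : ℕ} {x : List Bool}, x ∈ allL n ↔ x.length = n
  | 0, x => by cases x <;> simp [allL]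
  | n+1, x => by
    cases x with
    | nil => simp [allL]
    | cons b t =>
      simp [allL, mem_allL (n := n) (x := t)]
      cases b <;> simp [mem_allL (n := n)]

lemma nodup_allL : ∀ n, (allL n).Nodup
  | 0 => by simp [allL]
  | n+1 => by
    refine List.Nodup.append ?_ ?_ ?_
    · exact (nodup_allL n).map (fun a b h => by simpa using h)
    · exact (nodup_allL n).map (fun a b h => by simpa using h)
    · intro x hx hy
      simp only [List.mem_map] at hx hy
      obtain ⟨a, -, rfl⟩ := hx
      obtain ⟨b, -, h⟩ := hy
      simp at h

lemma length_allL : ∀ n, (allL n).length = 2 ^ n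
  | 0 => rfl
  | n+1 => by simp [allL, length_allL n, pow_succ]; ring

theorem computable_allL : Computable allL := by
  have hst : Primrec fun l : List (List Bool) =>
      (l.map (false :: ·)) ++ (l.map (true :: ·)) := by
    refine Primrec.list_append.comp ?_ ?_
    · exact Primrec.list_map Primrec.id
        (Primrec.list_cons.comp₂ (Primrec₂.const false) Primrec₂.right)
    · exact Primrec.list_map Primrec.id
        (Primrec.list_cons.comp₂ (Primrec₂.const true) Primrec₂.right)
  have := Computable.nat_rec (f := fun n : ℕ => n)
    (g := fun _ : ℕ => ([[]] : List (List Bool)))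
    (h := fun _ p => (p.2.map (false :: ·)) ++ (p.2.map (true :: ·)))
    Computable.id (Computable.const _)
    ((hst.to_comp.comp (Computable.snd.comp Computable.snd)).to₂)
  refine this.of_eq fun n => ?_
  induction n with
  | zero => rfl
  | succ n ih => simp [allL, ih]

theorem computable_list_map {α β σ : Type*} [Primcodable α] [Primcodable β] [Primcodable σ]
    {f : α → List β} {g : α → β → σ} (hf : Computable f) (hg : Computable₂ g) :
    Computable fun a => (f a).map (g a) := by
  have key : ∀ (l : List β) (G : β → σ) (n : ℕ),
      Nat.rec (motive := fun _ => List σ) ([] : List σ)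
        (fun i ih => ih ++ (l[i]?.map G).toList) n = (l.take n).map G := by
    intro l G n
    induction n with
    | zero => simp
    | succ n ih =>
      simp only [ih]
      rw [List.take_succ]
      simp only [List.map_append]
      cases l[n]? <;> simp
  have hh : Computable₂ fun (a : α) (p : ℕ × List σ) =>
      p.2 ++ ((f a)[p.1]?.map (g a)).toList := by
    have hopt : Computable fun x : α × ℕ × List σ => (f x.1)[x.2.1]?.map (g x.1) :=
      Computable.option_map
        (Computable.list_getElem?.comp (hf.comp Computable.fst)
          (Computable.fst.comp Computable.snd))
        (hg.comp (Computable.fst.comp Computable.fst) Computable.snd).to₂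
    have htl : Computable fun x : α × ℕ × List σ =>
        ((f x.1)[x.2.1]?.map (g x.1)).toList := by
      refine (Computable.option_casesOn hopt (Computable.const ([] : List σ))
        ((Computable.list_cons.comp Computable.snd
          (Computable.const ([] : List σ))).to₂)).of_eq fun x => ?_
      cases (f x.1)[x.2.1]?.map (g x.1) <;> rfl
    exact (Computable.list_append.comp (Computable.snd.comp Computable.snd) htl).to₂
  have := Computable.nat_rec (f := fun a => (f a).length)
    (g := fun _ : α => ([] : List σ))
    (h := fun a p => p.2 ++ ((f a)[p.1]?.map (g a)).toList)
    (Computable.list_length.comp hf) (Computable.const _) hh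
  refine this.of_eq fun a => ?_
  rw [key]; simp

theorem computable_list_filter {α β : Type*} [Primcodable α] [Primcodable β]
    {f : α → List β} {q : α → β → Bool} (hf : Computable f) (hq : Computable₂ q) :
    Computable fun a => (f a).filter (q a) := by
  have key : ∀ (l : List β) (Q : β → Bool),
      l.filter Q = (l.map fun x => bif Q x then [x] else []).flatten := by
    intro l Q
    induction l with
    | nil => rfl
    | cons x t ih =>
      simp only [List.filter_cons, List.map_cons, List.flatten_cons, ← ih]
      cases h : Q x <;> simp
  have hmap : Computable fun a => (f a).map fun x => bif q a x then [x] else [] := by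
    refine computable_list_map hf ?_
    exact (Computable.cond (hq.comp Computable.fst Computable.snd)
      (Computable.list_cons.comp Computable.snd (Computable.const []))
      (Computable.const [])).to₂
  refine ((Primrec.list_flatten.to_comp).comp hmap).of_eq fun a => (key _ _).symm

end Stmt3Aux

open Stmt3Aux in
theorem stmt3 (A : Set (List Bool)) (hA : ComputablePred (· ∈ A))
    (hdense : ∀ n : ℕ, 2 ^ n ≤ 3 * ({x | x ∈ A ∧ x.length = n} : Set (List Bool)).ncard) :
    ∃ a : List Bool → List Bool, Computable a ∧ Function.Injective a ∧
      ∀ p : List Bool, a p ∈ A ∧ (a p).length = p.length + 2 := by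
  obtain ⟨inst, hF⟩ := hA
  set F : List Bool → Bool := fun x => @decide (x ∈ A) (inst x) with hFdef
  have hFA : ∀ x, F x = true ↔ x ∈ A := fun x => by simp [hFdef, decide_eq_true_iff]
  -- the filtered lists
  set L : ℕ → List (List Bool) := fun n => (allL n).filter F with hLdef
  have hmemL : ∀ {n x}, x ∈ L n ↔ x ∈ A ∧ x.length = n := by
    intro n x
    simp [hLdef, List.mem_filter, mem_allL, hFA, and_comm]
  have hnodupL : ∀ n, (L n).Nodup := fun n => (nodup_allL n).filter _
  have hlenL : ∀ n, 2 ^ n ≤ 3 * (L n).length := by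
    intro n
    have hset : ({x | x ∈ A ∧ x.length = n} : Set (List Bool)) = ↑(L n).toFinset := by
      ext x; simp [hmemL]
    have := hdense n
    rwa [hset, Set.ncard_coe_finset, List.toFinset_card_of_nodup (hnodupL n)] at this
  have hlenL' : ∀ n, 2 ^ n < (L (n + 2)).length := by
    intro n
    have h1 := hlenL (n + 2)
    have hpos : 0 < 2 ^ n := pow_pos (by norm_num) n
    have h2 : 2 ^ (n + 2) = 4 * 2 ^ n := by ring
    omega
  -- the function
  set a : List Bool → List Bool :=
    fun p => (L (p.length + 2)).getD (@List.idxOf _ instBEqOfDecidableEq p (allL p.length)) [] with hadef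
  have hidx : ∀ p : List Bool,
      @List.idxOf _ instBEqOfDecidableEq p (allL p.length) < (L (p.length + 2)).length := by
    intro p
    have hp : p ∈ allL p.length := mem_allL.2 rfl
    calc @List.idxOf _ instBEqOfDecidableEq p (allL p.length) < (allL p.length).length :=
          (@List.idxOf_lt_length_iff _ instBEqOfDecidableEq _ _ _).2 hp
      _ = 2 ^ p.length := length_allL _
      _ < (L (p.length + 2)).length := hlenL' _
  have haget : ∀ p : List Bool,
      a p = (L (p.length + 2))[@List.idxOf _ instBEqOfDecidableEq p (allL p.length)]'(hidx p) := by
    intro p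
    exact List.getD_eq_getElem _ _ (hidx p)
  have hamem : ∀ p : List Bool, a p ∈ L (p.length + 2) := by
    intro p; rw [haget]; exact List.getElem_mem _
  have hmain : ∀ p : List Bool, a p ∈ A ∧ (a p).length = p.length + 2 :=
    fun p => hmemL.1 (hamem p)
  refine ⟨a, ?_, ?_, hmain⟩
  · -- computability
    have hlen : Computable fun p : List Bool => p.length := Computable.list_length
    have hL : Computable fun p : List Bool => L (p.length + 2) := by
      refine computable_list_filter
        (f := fun p : List Bool => allL (p.length + 2))
        (q := fun _ x => F x) ?_ (hF.comp Computable.snd).to₂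
      exact computable_allL.comp
        (Computable.succ.comp (Computable.succ.comp hlen))
    have hidxc : Computable fun p : List Bool =>
        @List.idxOf _ instBEqOfDecidableEq p (allL p.length) :=
      (Primrec.list_idxOf.to_comp).comp Computable.id (computable_allL.comp hlen)
    exact ((Primrec.list_getD ([] : List Bool)).to_comp.comp hL hidxc)
  · -- injectivity
    intro p q h
    have hlp : (a p).length = p.length + 2 := (hmain p).2
    have hlq : (a q).length = q.length + 2 := (hmain q).2
    have hlen : p.length = q.length := by
      have := hlp ▸ hlq ▸ congrArg List.length h
      omega
    have h' : (L (p.length + 2))[@List.idxOf _ instBEqOfDecidableEq p (allL p.length)]'(hidx p)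
        = (L (p.length + 2))[@List.idxOf _ instBEqOfDecidableEq q (allL q.length)]'(hlen ▸ hidx q) := by
      rw [← haget p, h, haget q]
      congr 1 <;> rw [hlen]
    have hij : @List.idxOf _ instBEqOfDecidableEq p (allL p.length)
        = @List.idxOf _ instBEqOfDecidableEq q (allL p.length) := by
      have := (List.Nodup.getElem_inj_iff (hnodupL _)).1 h'
      rwa [← hlen] at this
    have hp : p ∈ allL p.length := mem_allL.2 rfl
    have hq : q ∈ allL p.length := mem_allL.2 hlen.symm
    exact (@List.idxOf_inj _ instBEqOfDecidableEq _ _ _ q hp).1 hij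
end

section
/- There exists an optimal plain decompressor; that is, there is a partial computable function U : List Bool →. List Bool such that for every partial computable D : List Bool →. List Bool there is a constant c ∈ ℕ with C_U(x) ≤ C_D(x) + c for all binary strings x. -/
open scoped Classical

lemma aux_idx (k : ℕ) (y : List Bool) :
    (List.replicate k true ++ false :: y).idxOf false = k := by
  induction k with
  | zero => simp
  | succ n ih => simpa [List.replicate_succ] using ih

lemma aux_tl (k : ℕ) (y : List Bool) :
    List.tail^[k + 1] (List.replicate k true ++ false :: y) = y := by
  induction k with
  | zero => simp
  | succ n ih => simpa [List.replicate_succ, Function.iterate_succ_apply] using ih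

/-- there exists an optimal plain decompressor. -/
theorem stmt4 :
    ∃ U : List Bool →. List Bool, Partrec U ∧
      ∀ D : List Bool →. List Bool, Partrec D →
        ∃ c : ℕ, ∀ x : List Bool, Cpx U x ≤ Cpx D x + (c : ℕ∞) := by
  classical
  refine ⟨fun s => ((Denumerable.ofNat Nat.Partrec.Code (s.idxOf false)).eval
      (Encodable.encode (List.tail^[s.idxOf false + 1] s))).bind
      fun m => Part.ofOption (Encodable.decode (α := List Bool) m), ?_, ?_⟩
  · have hk : Primrec fun s : List Bool => s.idxOf false :=
      Primrec.list_idxOf.comp (Primrec.const false) Primrec.id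
    have htail : Primrec fun s : List Bool => List.tail^[s.idxOf false + 1] s :=
      Primrec.nat_iterate (Primrec.succ.comp hk) Primrec.id
        ((Primrec.list_tail.comp Primrec.snd).to₂)
    have hmain : Partrec fun s : List Bool =>
        (Denumerable.ofNat Nat.Partrec.Code (s.idxOf false)).eval
          (Encodable.encode (List.tail^[s.idxOf false + 1] s)) :=
      Nat.Partrec.Code.eval_part.comp ((Computable.ofNat _).comp hk.to_comp)
        (Computable.encode.comp htail.to_comp)
    exact hmain.bind ((Computable.decode.comp Computable.snd).ofOption)
  · intro D hD
    obtain ⟨c, hc⟩ := Nat.Partrec.Code.exists_code.1 hD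
    refine ⟨Encodable.encode c + 1, fun x => ?_⟩
    by_cases hne : {n : ℕ∞ | ∃ y : List Bool, x ∈ D y ∧ (y.length : ℕ∞) = n}.Nonempty
    · obtain ⟨y, hxy, hlen⟩ := csInf_mem hne
      set s : List Bool := List.replicate (Encodable.encode c) true ++ false :: y with hsdef
      have hcy : Encodable.encode x ∈ c.eval (Encodable.encode y) := by
        rw [hc]
        simp only [Encodable.encodek, Part.coe_some, Part.bind_some]
        exact Part.mem_map _ hxy
      have hUs : x ∈ ((Denumerable.ofNat Nat.Partrec.Code (s.idxOf false)).eval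
          (Encodable.encode (List.tail^[s.idxOf false + 1] s))).bind
          fun m => Part.ofOption (Encodable.decode (α := List Bool) m) := by
        rw [hsdef, aux_idx, aux_tl, Denumerable.ofNat_encode]
        exact Part.mem_bind_iff.2 ⟨_, hcy, by simp [Encodable.encodek]⟩
      have hle : Cpx (fun s => ((Denumerable.ofNat Nat.Partrec.Code (s.idxOf false)).eval
          (Encodable.encode (List.tail^[s.idxOf false + 1] s))).bind
          fun m => Part.ofOption (Encodable.decode (α := List Bool) m)) x
            ≤ (s.length : ℕ∞) := sInf_le ⟨s, hUs, rfl⟩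
      refine hle.trans ?_
      have hDx : Cpx D x = (y.length : ℕ∞) := by
        unfold Cpx; rw [hlen]
      rw [hDx, hsdef]
      simp only [List.length_append, List.length_replicate, List.length_cons]
      push_cast
      ring_nf
      exact le_refl _
    · have hDx : Cpx D x = ⊤ := by
        unfold Cpx; rw [Set.not_nonempty_iff_eq_empty.1 hne, sInf_empty]
      rw [hDx, top_add]
      exact le_top
end

section
/- There exists an optimal prefix-free decompressor; that is, there is a partial computable function V : List Bool →. List Bool whose domain is prefix-free and such that for every partial computable D : List Bool →. List Bool with prefix-free domain there is a constant c ∈ ℕ with C_V(x) ≤ C_D(x) + c for all binary strings x. -/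
set_option maxHeartbeats 2000000

open scoped Classical

section Construction

open Nat.Partrec (Code)
open Nat.Partrec.Code
open Encodable Denumerable

private def bnd : ℕ → ℕ := fun s => Nat.rec 1 (fun _ b => (b + 2) * (b + 2)) s

private lemma bnd_pos (s : ℕ) : 1 ≤ bnd s := by
  induction s with
  | zero => simp [bnd]
  | succ n ih => simp only [bnd] at *; nlinarith

private lemma bnd_mono : Monotone bnd := by
  apply monotone_nat_of_le_succ
  intro n
  have := bnd_pos n
  simp only [bnd] at *
  nlinarith

private lemma encode_lt_bnd {t : List Bool} {s : ℕ} (h : t.length ≤ s) : encode t < bnd s := by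
  have key : ∀ u : List Bool, encode u < bnd u.length := by
    intro u
    induction u with
    | nil => simp [encode_list_nil, bnd]
    | cons b l ih =>
      have hb : encode b ≤ 1 := by cases b <;> simp
      have hp : Nat.pair (encode b) (encode l) < (max (encode b) (encode l) + 1) ^ 2 :=
        Nat.pair_lt_max_add_one_sq _ _
      have hm : max (encode b) (encode l) + 1 ≤ bnd l.length + 1 := by
        have := bnd_pos l.length
        omega
      have h2 : Nat.pair (encode b) (encode l) < (bnd l.length + 1) ^ 2 :=
        lt_of_lt_of_le hp (Nat.pow_le_pow_left hm 2)
      have hlen : bnd (l.length + 1) = (bnd l.length + 2) * (bnd l.length + 2) := rfl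
      rw [encode_list_cons]
      have h3 : (bnd l.length + 1) ^ 2 < (bnd l.length + 2) * (bnd l.length + 2) := by nlinarith
      simp only [List.length_cons, hlen]
      omega
  exact lt_of_lt_of_le (key t) (bnd_mono h)

/-- `y` (of length ≤ s) converges under code `c` within `s` steps. -/
private def pconv (c : Code) (s : ℕ) (y : List Bool) : Bool :=
  (evaln s c (encode y)).isSome && (y.length ≤ s)

private lemma pconv_mono {c s s' y} (h : s ≤ s') (hc : pconv c s y = true) :
    pconv c s' y = true := by
  simp only [pconv, Bool.and_eq_true, Option.isSome_iff_exists, decide_eq_true_eq] at *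
  obtain ⟨⟨v, hv⟩, hl⟩ := hc
  exact ⟨⟨v, evaln_mono h hv⟩, le_trans hl h⟩

private lemma pconv_length {c s y} (hc : pconv c s y = true) : y.length ≤ s := by
  simp only [pconv, Bool.and_eq_true, decide_eq_true_eq] at hc; exact hc.2

private lemma pconv_dom {c s y} (hc : pconv c s y = true) : (eval c (encode y)).Dom := by
  simp only [pconv, Bool.and_eq_true, Option.isSome_iff_exists] at hc
  obtain ⟨⟨v, hv⟩, _⟩ := hc
  exact Part.dom_iff_mem.2 ⟨v, evaln_sound hv⟩

private lemma pconv_exists {c y} (hd : (eval c (encode y)).Dom) : ∃ s, pconv c s y = true := by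
  obtain ⟨v, hv⟩ := Part.dom_iff_mem.1 hd
  obtain ⟨k, hk⟩ := evaln_complete.1 hv
  refine ⟨max k y.length, ?_⟩
  simp only [pconv, Bool.and_eq_true, Option.isSome_iff_exists, decide_eq_true_eq]
  exact ⟨⟨v, evaln_mono (le_max_left _ _) hk⟩, le_max_right _ _⟩

/-- `y` is accepted at stage `s`: it converges, no proper prefix converges at this stage,
and no proper extension (of bounded length) converges at this stage. -/
private def pok (c : Code) (y : List Bool) (s : ℕ) : Bool :=
  pconv c s y &&
  ((List.range y.length).all fun k => !pconv c s (y.take k)) &&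
  ((List.range (bnd s)).all fun m =>
      Option.casesOn (decode (α := List Bool) m) true fun t =>
        decide (t = []) || !pconv c s (y ++ t))

private lemma pok_pconv {c y s} (h : pok c y s = true) : pconv c s y = true := by
  simp only [pok, Bool.and_eq_true] at h; exact h.1.1

private lemma pok_prefix {c y s} (h : pok c y s = true) {k} (hk : k < y.length) :
    pconv c s (y.take k) = false := by
  simp only [pok, Bool.and_eq_true, List.all_eq_true, List.mem_range] at h
  have := h.1.2 k hk
  simpa using this

private lemma pok_ext {c y s} (h : pok c y s = true) {t : List Bool} (ht : t ≠ [])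
    (hlt : encode t < bnd s) : pconv c s (y ++ t) = false := by
  simp only [pok, Bool.and_eq_true, List.all_eq_true, List.mem_range] at h
  have := h.2 (encode t) hlt
  rw [Encodable.encodek] at this
  simpa [ht] using this

/-- Key prefix-freeness lemma for accepted strings. -/
private lemma pok_pf {c y z s t} (hy : pok c y s = true) (hz : pok c z t = true)
    (hpre : y <+: z) : y = z := by
  by_contra hne
  have hyz : y.length < z.length := by
    rcases hpre with ⟨r, rfl⟩
    rcases r with _ | _
    · simp at hne
    · simp
  have hzt := pok_pconv hz
  have hys := pok_pconv hy
  have hytake : y = z.take y.length := List.prefix_iff_eq_take.mp hpre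
  have hyt : pconv c t y = false := by
    rw [hytake]; exact pok_prefix hz hyz
  have hts : t < s := by
    by_contra hle
    push_neg at hle
    have := pconv_mono hle hys
    rw [this] at hyt
    exact Bool.true_eq_false.mp hyt
  obtain ⟨r, rfl⟩ := hpre
  have hr : r ≠ [] := by
    intro h; subst h; simp at hyz
  have hrl : r.length ≤ s := by
    have := pconv_length hzt
    simp only [List.length_append] at this
    omega
  have hlt : encode r < bnd s := encode_lt_bnd hrl
  have hfalse := pok_ext hy hr hlt
  have h2 := pconv_mono (le_of_lt hts) hzt
  rw [h2] at hfalse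
  exact Bool.true_eq_false.mp hfalse

/-- The prefix-free decompressor associated to code `c`. -/
private def Dp (c : Code) : List Bool →. List Bool := fun y =>
  (Nat.rfind fun s => Part.some (pok c y s)).bind fun _ =>
    (eval c (encode y)).bind fun m => Part.ofOption (decode (α := List Bool) m)

/-- The universal prefix-free decompressor. -/
private def Vm : List Bool →. List Bool := fun w =>
  (Part.ofOption (if List.idxOf false w < w.length
      then some (List.idxOf false w, w.drop (List.idxOf false w + 1)) else none)).bind
    fun a => Dp (ofNat Code a.1) a.2

namespace PrimrecAux

open Primrec

private theorem my_list_all {α β : Type*} [Primcodable α] [Primcodable β]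
    {f : α → List β} {p : α → β → Bool} (hf : Primrec f) (hp : Primrec₂ p) :
    Primrec fun a => (f a).all (p a) :=
  (list_foldr hf (const true)
      ((dom_bool₂ (· && ·)).comp₂ (hp.comp fst (fst.comp snd)).to₂
        (snd.comp snd).to₂)).of_eq fun a => by
    induction f a with
    | nil => rfl
    | cons b l ih => simp [List.all_cons, ih]

private theorem my_list_take {α : Type*} [Primcodable α] [Inhabited α] :
    Primrec₂ (fun (l : List α) (n : ℕ) => l.take n) :=
  (list_map (list_range.comp (nat_min.comp snd (list_length.comp fst)))
      ((list_getI.comp (fst.comp fst) snd).to₂)).to₂.of_eq fun l n => by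
    apply List.ext_getElem
    · simp
    · intro i h1 h2
      simp only [List.getElem_map, List.getElem_range, List.getElem_take]
      rw [List.getI_eq_getElem]

private theorem my_list_drop {α : Type*} [Primcodable α] [Inhabited α] :
    Primrec₂ (fun (l : List α) (n : ℕ) => l.drop n) :=
  (list_map (list_range.comp (nat_sub.comp (list_length.comp fst) snd))
      ((list_getI.comp (fst.comp fst) (nat_add.comp (snd.comp fst) snd)).to₂)).to₂.of_eq
    fun l n => by
    apply List.ext_getElem
    · simp
    · intro i h1 h2
      simp only [List.getElem_map, List.getElem_range, List.getElem_drop]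
      rw [List.getI_eq_getElem]

private theorem my_bnd : Primrec bnd :=
  nat_rec₁ 1 (nat_mul.comp (nat_add.comp snd (const 2)) (nat_add.comp snd (const 2)))

private theorem my_pconv : Primrec fun a : (Code × ℕ) × List Bool => pconv a.1.1 a.1.2 a.2 :=
  (dom_bool₂ (· && ·)).comp
    (option_isSome.comp <| primrec_evaln.comp <|
      pair (pair (snd.comp fst) (fst.comp fst)) (Primrec.encode.comp snd))
    (nat_le.comp (list_length.comp snd) (snd.comp fst)).decide

private theorem my_pok :
    Primrec fun a : (ℕ × List Bool) × ℕ => pok (ofNat Code a.1.1) a.1.2 a.2 := by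
  have hc : Primrec fun a : (ℕ × List Bool) × ℕ => ofNat Code a.1.1 :=
    (Primrec.ofNat Code).comp (fst.comp fst)
  have hy : Primrec fun a : (ℕ × List Bool) × ℕ => a.1.2 := snd.comp fst
  have hs : Primrec fun a : (ℕ × List Bool) × ℕ => a.2 := snd
  have h1 : Primrec fun a : (ℕ × List Bool) × ℕ => pconv (ofNat Code a.1.1) a.2 a.1.2 :=
    my_pconv.comp (pair (pair hc hs) hy)
  have h2 : Primrec fun a : (ℕ × List Bool) × ℕ =>
      (List.range a.1.2.length).all fun k => !pconv (ofNat Code a.1.1) a.2 (a.1.2.take k) := by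
    apply my_list_all (list_range.comp (list_length.comp hy))
    exact ((dom_bool Bool.not).comp
      (my_pconv.comp (pair (pair (hc.comp fst) (hs.comp fst))
        (my_list_take.comp (hy.comp fst) snd)))).to₂
  have h3 : Primrec fun a : (ℕ × List Bool) × ℕ =>
      (List.range (bnd a.2)).all fun m =>
        Option.casesOn (decode (α := List Bool) m) true fun t =>
          decide (t = []) || !pconv (ofNat Code a.1.1) a.2 (a.1.2 ++ t) := by
    apply my_list_all (list_range.comp (my_bnd.comp hs))
    have hdec : Primrec fun p : ((ℕ × List Bool) × ℕ) × ℕ => decode (α := List Bool) p.2 :=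
      Primrec.decode.comp snd
    have hgl : Primrec fun q : (((ℕ × List Bool) × ℕ) × ℕ) × List Bool =>
        (decide (q.2 = []) || !pconv (ofNat Code q.1.1.1.1) q.1.1.2 (q.1.1.1.2 ++ q.2)) :=
      (dom_bool₂ (· || ·)).comp
        (Primrec.eq.comp snd (const ([] : List Bool))).decide
        ((dom_bool Bool.not).comp
          (my_pconv.comp (pair (pair (hc.comp (fst.comp fst)) (hs.comp (fst.comp fst)))
            (list_append.comp (hy.comp (fst.comp fst)) snd))))
    exact (option_casesOn hdec (const true) hgl.to₂).to₂
  exact ((dom_bool₂ (· && ·)).comp ((dom_bool₂ (· && ·)).comp h1 h2) h3).of_eq fun a => rfl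

end PrimrecAux

private theorem my_Dp : Partrec fun a : ℕ × List Bool => Dp (ofNat Code a.1) a.2 := by
  have hrfind : Partrec fun a : ℕ × List Bool =>
      Nat.rfind fun s => Part.some (pok (ofNat Code a.1) a.2 s) := by
    apply Partrec.rfind
    exact PrimrecAux.my_pok.to_comp.to₂.partrec₂
  have heval : Partrec fun p : (ℕ × List Bool) × ℕ =>
      eval (ofNat Code p.1.1) (encode p.1.2) :=
    eval_part.comp
      (((Primrec.ofNat Code).to_comp).comp (Computable.fst.comp Computable.fst))
      (Computable.encode.comp (Computable.snd.comp Computable.fst))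
  have hrest : Partrec₂ fun (a : ℕ × List Bool) (_ : ℕ) =>
      (eval (ofNat Code a.1) (encode a.2)).bind fun m =>
        Part.ofOption (decode (α := List Bool) m) :=
    heval.bind (Computable.ofOption (Computable.decode.comp Computable.snd))
  exact (hrfind.bind hrest).of_eq fun a => rfl

private theorem my_Vm : Partrec Vm := by
  have hidx : Primrec fun w : List Bool => List.idxOf false w :=
    Primrec.list_idxOf.comp (Primrec.const false) Primrec.id
  have hF : Computable fun w : List Bool =>
      (if List.idxOf false w < w.length
        then some (List.idxOf false w, w.drop (List.idxOf false w + 1)) else none) := by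
    apply Primrec.to_comp
    exact Primrec.ite (Primrec.nat_lt.comp hidx Primrec.list_length)
      (Primrec.option_some.comp (Primrec.pair hidx
        (PrimrecAux.my_list_drop.comp Primrec.id (Primrec.succ.comp hidx))))
      (Primrec.const none)
  exact ((Computable.ofOption hF).bind (my_Dp.comp Computable.snd).to₂).of_eq fun w => rfl

/- ### Domain and membership lemmas -/

private lemma Dp_dom_pok {c y} (h : (Dp c y).Dom) : ∃ s, pok c y s = true := by
  obtain ⟨v, hv⟩ := Part.dom_iff_mem.1 h
  simp only [Dp, Part.mem_bind_iff] at hv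
  obtain ⟨a, ha, -⟩ := hv
  have := Nat.rfind_spec ha
  exact ⟨a, (Part.mem_some_iff.1 this).symm⟩

private lemma mem_Dp {c y x s} (hs : pok c y s = true) (hx : encode x ∈ eval c (encode y)) :
    x ∈ Dp c y := by
  have hdom : (Nat.rfind fun s => Part.some (pok c y s)).Dom := by
    apply Nat.rfind_dom.2
    exact ⟨s, Part.mem_some_iff.2 hs.symm, fun _ => trivial⟩
  refine Part.mem_bind_iff.2 ⟨_, Part.get_mem hdom, ?_⟩
  refine Part.mem_bind_iff.2 ⟨encode x, hx, ?_⟩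
  simp [Part.mem_ofOption, Encodable.encodek]

private lemma idx_repl (n : ℕ) (y : List Bool) :
    List.idxOf false (List.replicate n true ++ false :: y) = n := by
  rw [List.idxOf_append_of_notMem (by simp)]
  simp

private lemma drop_repl (n : ℕ) (y : List Bool) :
    (List.replicate n true ++ false :: y).drop (n + 1) = y := by
  have : List.replicate n true ++ false :: y
      = (List.replicate n true ++ [false]) ++ y := by simp
  rw [this]
  have hlen : (List.replicate n true ++ [false]).length = n + 1 := by simp
  rw [← hlen, List.drop_left]

private lemma mem_Vm_of {n y x} (h : x ∈ Dp (ofNat Code n) y) :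
    x ∈ Vm (List.replicate n true ++ false :: y) := by
  have hcond : n < (List.replicate n true ++ false :: y).length := by
    simp
  refine Part.mem_bind_iff.2 ⟨(n, y), ?_, h⟩
  rw [Part.mem_ofOption, idx_repl, drop_repl, if_pos hcond]
  simp

private lemma Vm_dom_decomp {w} (h : (Vm w).Dom) :
    List.idxOf false w < w.length ∧
    ∃ s, pok (ofNat Code (List.idxOf false w)) (w.drop (List.idxOf false w + 1)) s = true := by
  obtain ⟨v, hv⟩ := Part.dom_iff_mem.1 h
  simp only [Vm, Part.mem_bind_iff] at hv
  obtain ⟨a, ha, hva⟩ := hv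
  rw [Part.mem_ofOption] at ha
  by_cases hlt : List.idxOf false w < w.length
  · rw [if_pos hlt] at ha
    rcases Option.mem_some_iff.1 ha with rfl
    exact ⟨hlt, Dp_dom_pok (Part.dom_iff_mem.2 ⟨v, hva⟩)⟩
  · rw [if_neg hlt] at ha
    simp at ha

private lemma Vm_prefixFree : PrefixFreeSet Vm.Dom := by
  intro w hw w' hw' hpre
  obtain ⟨hlt, s, hs⟩ := Vm_dom_decomp hw
  obtain ⟨hlt', t, ht⟩ := Vm_dom_decomp hw'
  obtain ⟨r, rfl⟩ := hpre
  have hmem : false ∈ w := List.idxOf_lt_length_iff.1 hlt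
  have hidx : List.idxOf false (w ++ r) = List.idxOf false w :=
    List.idxOf_append_of_mem hmem
  rw [hidx] at ht
  have hdrop : (w ++ r).drop (List.idxOf false w + 1)
      = w.drop (List.idxOf false w + 1) ++ r :=
    List.drop_append_of_le_length (by omega)
  rw [hdrop] at ht
  have := pok_pf hs ht (List.prefix_append _ _)
  have hr : r = [] := by
    have hlen := congrArg List.length this
    simp at hlen
    exact hlen
  rw [hr, List.append_nil]

/- ### Complexity lemmas -/

private lemma Cpx_le_of_mem {D : List Bool →. List Bool} {x y} (h : x ∈ D y) :
    Cpx D x ≤ (y.length : ℕ∞) :=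
  sInf_le ⟨y, h, rfl⟩

private lemma Cpx_attained {D : List Bool →. List Bool} {x} (h : Cpx D x ≠ ⊤) :
    ∃ y, x ∈ D y ∧ Cpx D x = (y.length : ℕ∞) := by
  have hne : {n : ℕ∞ | ∃ y : List Bool, x ∈ D y ∧ (y.length : ℕ∞) = n}.Nonempty := by
    by_contra hemp
    rw [Set.not_nonempty_iff_eq_empty] at hemp
    apply h
    simp [Cpx, hemp]
  obtain ⟨y, hxy, hy⟩ := csInf_mem hne
  exact ⟨y, hxy, hy.symm⟩

end Construction

/-- there exists an optimal prefix-free decompressor. -/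
theorem stmt5 :
    ∃ V : List Bool →. List Bool, Partrec V ∧ PrefixFreeSet V.Dom ∧
      ∀ D : List Bool →. List Bool, Partrec D → PrefixFreeSet D.Dom →
        ∃ c : ℕ, ∀ x : List Bool, Cpx V x ≤ Cpx D x + (c : ℕ∞) := by
  classical
  refine ⟨Vm, my_Vm, Vm_prefixFree, ?_⟩
  intro D hD hpf
  obtain ⟨c, hc⟩ := Nat.Partrec.Code.exists_code.1 hD
  have key : ∀ y : List Bool, Nat.Partrec.Code.eval c (Encodable.encode y)
      = (D y).map Encodable.encode := by
    intro y
    rw [hc]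
    simp [Encodable.encodek]
  refine ⟨Encodable.encode c + 1, ?_⟩
  intro x
  by_cases hx : Cpx D x = ⊤
  · rw [hx]; simp
  obtain ⟨y, hxy, hlen⟩ := Cpx_attained hx
  -- y is in the domain of D
  have hyd : y ∈ D.Dom := Part.dom_iff_mem.2 ⟨x, hxy⟩
  -- pok holds at some stage for y
  have hpok : ∃ s, pok c y s = true := by
    have hed : (Nat.Partrec.Code.eval c (Encodable.encode y)).Dom := by
      rw [key]
      exact Part.dom_iff_mem.2 ⟨Encodable.encode x, Part.mem_map _ hxy⟩
    obtain ⟨s, hs⟩ := pconv_exists hed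
    refine ⟨s, ?_⟩
    have hnotconv : ∀ z : List Bool, z <+: y ∨ y <+: z → z ≠ y → pconv c s z = false := by
      intro z hz hne
      by_contra hcv
      rw [Bool.not_eq_false] at hcv
      have hzd : z ∈ D.Dom := by
        have := pconv_dom hcv
        rw [key] at this
        exact Part.dom_iff_mem.1 this |>.elim fun v hv => by
          rcases Part.mem_map_iff _ |>.1 hv with ⟨u, hu, -⟩
          exact Part.dom_iff_mem.2 ⟨u, hu⟩
      rcases hz with hz | hz
      · exact hne (hpf z hzd y hyd hz)
      · exact hne (hpf y hyd z hzd hz).symm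
    simp only [pok, Bool.and_eq_true, List.all_eq_true, List.mem_range]
    refine ⟨⟨hs, ?_⟩, ?_⟩
    · intro k hk
      have := hnotconv (y.take k) (Or.inl (List.take_prefix _ _))
        (by intro hEq; have := congrArg List.length hEq; simp at this; omega)
      simp [this]
    · intro m hm
      cases hdm : Encodable.decode (α := List Bool) m with
      | none => simp
      | some t =>
        by_cases htn : t = []
        · simp [htn]
        · have := hnotconv (y ++ t) (Or.inr (List.prefix_append _ _))
            (by intro hEq; apply htn
                have := congrArg List.length hEq; simp at this
                exact this)
          simp [this, htn]
  obtain ⟨s, hs⟩ := hpok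
  -- the witness description for x under Vm
  have hxe : Encodable.encode x ∈ Nat.Partrec.Code.eval c (Encodable.encode y) := by
    rw [key]
    exact Part.mem_map _ hxy
  have hmem : x ∈ Vm (List.replicate (Encodable.encode c) true ++ false :: y) := by
    apply mem_Vm_of
    rw [Denumerable.ofNat_encode]
    exact mem_Dp hs hxe
  have hle := Cpx_le_of_mem hmem
  have hwlen : ((List.replicate (Encodable.encode c) true ++ false :: y).length : ℕ∞)
      = (y.length : ℕ∞) + ((Encodable.encode c + 1 : ℕ) : ℕ∞) := by
    simp
    ring
  rw [hwlen] at hle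
  rw [hlen]
  exact hle
end

section
/- Kraft–Chaitin lemma: for every total computable sequence n : ℕ → ℕ with ∑_{i} 2^{-n(i)} ≤ 1, there exists a total computable sequence x : ℕ → List Bool of binary strings such that for every i the length of x(i) equals n(i), and for all i ≠ j the string x(i) is not a prefix of x(j) (in particular all x(i) are distinct and form a prefix-free set). -/
open scoped Classical
open scoped NNReal

namespace KCwork

def incomp (u v : List Bool) : Prop := ¬ u <+: v ∧ ¬ v <+: u

theorem incomp.symm {u v : List Bool} (h : incomp u v) : incomp v u := ⟨h.2, h.1⟩

theorem incomp.append_right {u w : List Bool} (h : incomp u w) (t : List Bool) :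
    incomp u (w ++ t) := by
  constructor
  · intro hp
    rcases List.prefix_or_prefix_of_prefix hp (List.prefix_append w t) with h1 | h1
    · exact h.1 h1
    · exact h.2 h1
  · intro hp
    exact h.2 ((List.prefix_append w t).trans hp)

def piece (w : List Bool) (a : ℕ) : List Bool := w ++ (List.replicate a false ++ [true])

@[simp] theorem piece_length (w : List Bool) (a : ℕ) :
    (piece w a).length = w.length + a + 1 := by
  simp [piece]; omega

theorem not_prefix_piece {a b : ℕ} (h : a < b) (w s : List Bool) :
    ¬ (piece w a <+: w ++ (List.replicate b false ++ s)) := by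
  intro hp
  have ht := List.prefix_iff_eq_take.mp hp
  rw [piece_length] at ht
  have h1 : (w ++ (List.replicate b false ++ s)).take (w.length + a + 1)
      = w ++ List.replicate (a+1) false := by
    rw [show w.length + a + 1 = w.length + (a+1) by ring, List.take_append,
      List.take_append_of_le_length (by simp; omega), List.take_replicate]
    congr 2
    · exact List.take_of_length_le (by omega)
    · omega
  rw [h1] at ht
  rw [piece] at ht
  have h2 : List.replicate a false ++ [true] = List.replicate (a+1) false :=
    List.append_cancel_left ht
  rw [List.replicate_succ'] at h2
  have := List.append_inj_right h2 (by simp)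
  simp at this

theorem incomp_piece_piece {a b : ℕ} (h : a < b) (w : List Bool) :
    incomp (piece w a) (piece w b) := by
  constructor
  · exact not_prefix_piece h w [true]
  · intro hp
    have := hp.length_le
    simp at this
    omega

theorem incomp_piece_assigned {a k : ℕ} (h : a < k) (w : List Bool) :
    incomp (piece w a) (w ++ List.replicate k false) := by
  constructor
  · have := not_prefix_piece h w ([] : List Bool)
    simpa using this
  · intro hp
    have hl := hp.length_le
    simp at hl
    have hk : k = a + 1 := by omega
    subst hk
    have := hp.eq_of_length (by simp; omega)
    rw [piece] at this
    have h2 : List.replicate (a+1) false = List.replicate a false ++ [true] :=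
      List.append_cancel_left this
    rw [List.replicate_succ'] at h2
    have := List.append_inj_right h2 (by simp)
    simp at this


def np (m : ℕ) (w : List Bool) : List (List Bool) :=
  ((List.range (m - w.length)).reverse).map (piece w)

theorem mem_np {m : ℕ} {w v : List Bool} :
    v ∈ np m w ↔ ∃ a < m - w.length, v = piece w a := by
  simp [np, eq_comm]

def step (m : ℕ) (L : List (List Bool)) : List Bool × List (List Bool) :=
  List.rec (([], []) : List Bool × List (List Bool))
    (fun w L IH => if m < w.length then (IH.1, w :: IH.2)
      else (w ++ List.replicate (m - w.length) false, np m w ++ L)) L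

theorem step_nil (m : ℕ) : step m [] = ([], []) := rfl

theorem step_cons (m : ℕ) (w : List Bool) (L : List (List Bool)) :
    step m (w :: L) = if m < w.length then ((step m L).1, w :: (step m L).2)
      else (w ++ List.replicate (m - w.length) false, np m w ++ L) := rfl

theorem step_eq (m : ℕ) : ∀ (L : List (List Bool)), (∃ w ∈ L, w.length ≤ m) →
    ∃ pre w post, L = pre ++ w :: post ∧ w.length ≤ m ∧ (∀ u ∈ pre, m < u.length) ∧
      step m L = (w ++ List.replicate (m - w.length) false, pre ++ (np m w ++ post))
  | [], h => by simp at h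
  | w :: L, h => by
    by_cases hw : m < w.length
    · have hL : ∃ v ∈ L, v.length ≤ m := by
        rcases h with ⟨v, hv, hvl⟩
        rcases List.mem_cons.mp hv with rfl | hv
        · omega
        · exact ⟨v, hv, hvl⟩
      obtain ⟨pre, v, post, hsplit, hvl, hpre, hst⟩ := step_eq m L hL
      refine ⟨w :: pre, v, post, by simp [hsplit], hvl, ?_, ?_⟩
      · intro u hu
        rcases List.mem_cons.mp hu with rfl | hu
        · exact hw
        · exact hpre u hu
      · rw [step_cons, if_pos hw, hst]
        simp
    · refine ⟨[], w, L, by simp, by omega, by simp, ?_⟩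
      rw [step_cons, if_neg hw]
      simp

def free (n : ℕ → ℕ) (i : ℕ) : List (List Bool) :=
  Nat.rec [([] : List Bool)] (fun y IH => (step (n y) IH).2) i

def xs (n : ℕ → ℕ) (i : ℕ) : List Bool := (step (n i) (free n i)).1

theorem free_succ (n : ℕ → ℕ) (i : ℕ) : free n (i+1) = (step (n i) (free n i)).2 := rfl

noncomputable def mu (L : List (List Bool)) : ℝ≥0 :=
  (L.map fun w => (2:ℝ≥0)⁻¹ ^ w.length).sum

theorem mu_append (L M : List (List Bool)) : mu (L ++ M) = mu L + mu M := by
  simp [mu]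

theorem half_add_half {c : ℕ} : (2:ℝ≥0)⁻¹ ^ (c+1) + (2:ℝ≥0)⁻¹ ^ (c+1) = (2:ℝ≥0)⁻¹ ^ c := by
  rw [pow_succ, ← mul_add]
  have : (2:ℝ≥0)⁻¹ + (2:ℝ≥0)⁻¹ = 1 := by
    rw [← two_mul]
    exact mul_inv_cancel₀ two_ne_zero
  rw [this, mul_one]

theorem geom (c : ℕ) : ∀ k : ℕ,
    (((List.range k).map fun a => (2:ℝ≥0)⁻¹ ^ (c + a + 1)).sum) + (2:ℝ≥0)⁻¹ ^ (c + k)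
      = (2:ℝ≥0)⁻¹ ^ c
  | 0 => by simp
  | k+1 => by
    rw [List.range_succ, List.map_append, List.sum_append]
    have h2 : (2:ℝ≥0)⁻¹ ^ (c + (k+1)) = (2:ℝ≥0)⁻¹ ^ (c + k + 1) := by ring_nf
    rw [h2]
    have := geom c k
    calc (((List.range k).map fun a => (2:ℝ≥0)⁻¹ ^ (c + a + 1)).sum)
        + ([(2:ℝ≥0)⁻¹ ^ (c + k + 1)]).sum + (2:ℝ≥0)⁻¹ ^ (c + k + 1)
        = (((List.range k).map fun a => (2:ℝ≥0)⁻¹ ^ (c + a + 1)).sum)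
          + ((2:ℝ≥0)⁻¹ ^ (c + k + 1) + (2:ℝ≥0)⁻¹ ^ (c + k + 1)) := by
          simp; ring
      _ = (((List.range k).map fun a => (2:ℝ≥0)⁻¹ ^ (c + a + 1)).sum) + (2:ℝ≥0)⁻¹ ^ (c + k) := by
          rw [half_add_half]
      _ = (2:ℝ≥0)⁻¹ ^ c := geom c k

theorem mu_np {m : ℕ} {w : List Bool} (h : w.length ≤ m) :
    mu (np m w) + (2:ℝ≥0)⁻¹ ^ m = (2:ℝ≥0)⁻¹ ^ w.length := by
  have : mu (np m w)
      = (((List.range (m - w.length)).map fun a => (2:ℝ≥0)⁻¹ ^ (w.length + a + 1)).sum) := by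
    rw [mu, np, List.map_map, List.map_reverse, List.sum_reverse]
    congr 1
    apply List.map_congr_left
    intro a _
    simp
  rw [this]
  have hm : w.length + (m - w.length) = m := by omega
  rw [← hm]
  have := geom w.length (m - w.length)
  simpa using this

theorem mu_lt (m : ℕ) : ∀ L : List (List Bool),
    L.Pairwise (fun u v => u.length < v.length) → (∀ w ∈ L, m < w.length) →
    mu L < (2:ℝ≥0)⁻¹ ^ m
  | [], _, _ => by
    have : mu ([] : List (List Bool)) = 0 := by simp [mu]
    rw [this]
    positivity
  | w :: L, hp, hm => by
    have h1 : mu L < (2:ℝ≥0)⁻¹ ^ w.length :=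
      mu_lt w.length L hp.of_cons (fun v hv => (List.pairwise_cons.mp hp).1 v hv)
    have h2 : mu (w :: L) = (2:ℝ≥0)⁻¹ ^ w.length + mu L := by simp [mu]
    have h3 : (2:ℝ≥0)⁻¹ ^ w.length ≤ (2:ℝ≥0)⁻¹ ^ (m+1) := by
      apply pow_le_pow_of_le_one (by positivity) (by norm_num)
      exact hm w (by simp)
    calc mu (w :: L) = (2:ℝ≥0)⁻¹ ^ w.length + mu L := h2
      _ < (2:ℝ≥0)⁻¹ ^ w.length + (2:ℝ≥0)⁻¹ ^ w.length := by
          exact add_lt_add_right h1 _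
      _ ≤ (2:ℝ≥0)⁻¹ ^ (m+1) + (2:ℝ≥0)⁻¹ ^ (m+1) := add_le_add h3 h3
      _ = (2:ℝ≥0)⁻¹ ^ m := half_add_half


theorem main (n : ℕ → ℕ)
    (hpart : ∀ i, (∑ j ∈ Finset.range (i+1), (2:ℝ≥0)⁻¹ ^ n j) ≤ 1) : ∀ i : ℕ,
    (free n i).Pairwise (fun u v => v.length < u.length) ∧
    mu (free n i) + (∑ j ∈ Finset.range i, (2:ℝ≥0)⁻¹ ^ n j) = 1 ∧
    (∀ j < i, ∀ v ∈ free n i, incomp (xs n j) v) ∧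
    (∀ u ∈ free n i, ∀ v ∈ free n i, u ≠ v → incomp u v) ∧
    (∀ j < i, ∀ k < i, j ≠ k → incomp (xs n j) (xs n k)) ∧
    (∀ j < i, (xs n j).length = n j)
  | 0 => by
    refine ⟨by simp [free], by simp [free, mu], by omega, ?_, by omega, by omega⟩
    intro u hu v hv hne
    simp [free] at hu hv
    exact absurd (hu.trans hv.symm) hne
  | i + 1 => by
    obtain ⟨D, M, C1, C2, C3, LEN⟩ := main n hpart i
    set L := free n i with hL
    set m := n i with hm
    -- partial sum bound
    have hle : (∑ j ∈ Finset.range i, (2:ℝ≥0)⁻¹ ^ n j) + (2:ℝ≥0)⁻¹ ^ m ≤ 1 := by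
      have := hpart i
      rwa [Finset.sum_range_succ] at this
    have hmuge : (2:ℝ≥0)⁻¹ ^ m ≤ mu L := by
      have h1 : (∑ j ∈ Finset.range i, (2:ℝ≥0)⁻¹ ^ n j) + (2:ℝ≥0)⁻¹ ^ m ≤
          mu L + (∑ j ∈ Finset.range i, (2:ℝ≥0)⁻¹ ^ n j) := by rw [M]; exact hle
      rw [add_comm (mu L)] at h1
      exact le_of_add_le_add_left h1
    have hex : ∃ w ∈ L, w.length ≤ m := by
      by_contra hc
      push_neg at hc
      have hrev : L.reverse.Pairwise (fun u v : List Bool => u.length < v.length) :=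
        List.pairwise_reverse.mpr D
      have hlt : mu L.reverse < (2:ℝ≥0)⁻¹ ^ m :=
        mu_lt m L.reverse hrev (fun w hw => hc w (List.mem_reverse.mp hw))
      have hmu : mu L.reverse = mu L := by
        rw [mu, mu, List.map_reverse, List.sum_reverse]
      rw [hmu] at hlt
      exact absurd hmuge (not_le.mpr hlt)
    obtain ⟨pre, w, post, hsplit, hwle, hpre, hst⟩ := step_eq m L hex
    have hwL : w ∈ L := by rw [hsplit]; simp
    have hx : xs n i = w ++ List.replicate (m - w.length) false := by
      rw [xs, ← hm, ← hL, hst]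
    have hf : free n (i+1) = pre ++ (np m w ++ post) := by
      rw [free_succ, ← hm, ← hL, hst]
    have Dsplit : (pre ++ w :: post).Pairwise (fun u v : List Bool => v.length < u.length) := by
      rw [← hsplit]; exact D
    obtain ⟨Dpre, Dwpost, Hcross⟩ := List.pairwise_append.mp Dsplit
    obtain ⟨Hwpost, Dpost⟩ := List.pairwise_cons.mp Dwpost
    -- length facts for np
    have hnp_len : ∀ v ∈ np m w, w.length < v.length ∧ v.length ≤ m := by
      intro v hv
      obtain ⟨a, ha, rfl⟩ := mem_np.mp hv
      simp only [piece_length]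
      omega
    -- membership characterization
    have hmem : ∀ v ∈ free n (i+1),
        (v ∈ L ∧ v.length ≠ w.length) ∨ ∃ a < m - w.length, v = piece w a := by
      intro v hv
      rw [hf] at hv
      rcases List.mem_append.mp hv with hv | hv
      · left
        refine ⟨by rw [hsplit]; simp [hv], ?_⟩
        have := hpre v hv
        omega
      · rcases List.mem_append.mp hv with hv | hv
        · right; exact mem_np.mp hv
        · left
          refine ⟨by rw [hsplit]; simp [hv], ?_⟩
          have := Hwpost v hv
          omega
    have hWold : ∀ v ∈ L, v.length ≠ w.length → ∀ t, incomp v (w ++ t) := by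
      intro v hv hne t
      refine (C2 v hv w hwL ?_).append_right t
      intro h; rw [h] at hne; exact hne rfl
    refine ⟨?_, ?_, ?_, ?_, ?_, ?_⟩
    -- (1) pairwise decreasing lengths
    · rw [hf]
      refine List.pairwise_append.mpr ⟨Dpre, ?_, ?_⟩
      · refine List.pairwise_append.mpr ⟨?_, Dpost, ?_⟩
        · rw [np]
          refine List.pairwise_map.mpr ?_
          refine List.pairwise_reverse.mpr ?_
          refine List.pairwise_lt_range.imp ?_
          intro a b hab
          simp only [piece_length]
          omega
        · intro u hu v hv
          have h1 := (hnp_len u hu).1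
          have h2 := Hwpost v hv
          omega
      · intro u hu v hv
        have hu' := hpre u hu
        rcases List.mem_append.mp hv with hv | hv
        · have := (hnp_len v hv).2
          omega
        · exact Hcross u hu v (by simp [hv])
    -- (2) measure
    · have e1 : mu (free n (i+1)) = mu pre + (mu (np m w) + mu post) := by
        rw [hf, mu_append, mu_append]
      have e2 : mu L = mu pre + ((2:ℝ≥0)⁻¹ ^ w.length + mu post) := by
        rw [hsplit, mu_append]
        simp [mu]
      rw [Finset.sum_range_succ, e1, ← M, e2, ← hm, ← mu_np hwle]
      ring
    -- (3) assigned vs free incomp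
    · intro j hj v hv
      rcases hmem v hv with ⟨hvL, hlen⟩ | ⟨a, ha, rfl⟩
      · rcases Nat.lt_or_ge j i with hji | hji
        · exact C1 j hji v hvL
        · have hji' : j = i := by omega
          subst hji'
          rw [hx]
          exact (hWold v hvL hlen _).symm
      · rcases Nat.lt_or_ge j i with hji | hji
        · exact (C1 j hji w hwL).append_right _
        · have hji' : j = i := by omega
          subst hji'
          rw [hx]
          exact (incomp_piece_assigned ha w).symm
    -- (4) free pairwise incomp
    · intro u hu v hv hne
      rcases hmem u hu with ⟨huL, hulen⟩ | ⟨a, ha, rfl⟩ <;>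
        rcases hmem v hv with ⟨hvL, hvlen⟩ | ⟨b, hb, rfl⟩
      · exact C2 u huL v hvL hne
      · exact hWold u huL hulen _
      · exact (hWold v hvL hvlen _).symm
      · have hab : a ≠ b := by
          intro h; rw [h] at hne; exact hne rfl
        rcases Nat.lt_or_ge a b with h | h
        · exact incomp_piece_piece h w
        · exact (incomp_piece_piece (by omega) w).symm
    -- (5) assigned pairwise incomp
    · intro j hj k hk hjk
      rcases Nat.lt_or_ge j i with hji | hji <;> rcases Nat.lt_or_ge k i with hki | hki
      · exact C3 j hji k hki hjk
      · have : k = i := by omega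
        subst this
        rw [hx]
        exact (C1 j hji w hwL).append_right _
      · have : j = i := by omega
        subst this
        rw [hx]
        exact ((C1 k hki w hwL).append_right _).symm
      · omega
    -- (6) lengths
    · intro j hj
      rcases Nat.lt_or_ge j i with hji | hji
      · exact LEN j hji
      · have : j = i := by omega
        subst this
        rw [hx]
        simp
        omega


theorem repFalse_primrec : Primrec (fun k : ℕ => List.replicate k false) := by
  have h : Primrec (fun k : ℕ => (List.range k).map (fun _ => false)) :=
    Primrec.list_map Primrec.list_range (Primrec₂.const false)
  refine h.of_eq (fun k => ?_)
  induction k with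
  | zero => simp
  | succ k ih => rw [List.range_succ, List.map_append, ih, List.replicate_succ']; simp

theorem np_primrec : Primrec₂ np := by
  have h : Primrec fun p : ℕ × List Bool =>
      ((List.range (p.1 - p.2.length)).reverse).map (fun a => p.2 ++ (List.replicate a false ++ [true])) :=
    Primrec.list_map
      (Primrec.list_reverse.comp (Primrec.list_range.comp
        (Primrec.nat_sub.comp Primrec.fst (Primrec.list_length.comp Primrec.snd))))
      ((Primrec.list_append.comp (Primrec.snd.comp Primrec.fst)
        (Primrec.list_append.comp (repFalse_primrec.comp Primrec.snd)
          (Primrec.const [true]))).to₂)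
  exact h.to₂

theorem step_primrec : Primrec₂ step := by
  have hh : Primrec fun p : (ℕ × List (List Bool)) × (List Bool × List (List Bool) × (List Bool × List (List Bool))) =>
      if p.1.1 < p.2.1.length then (p.2.2.2.1, p.2.1 :: p.2.2.2.2)
      else (p.2.1 ++ List.replicate (p.1.1 - p.2.1.length) false, np p.1.1 p.2.1 ++ p.2.2.1) := by
    refine Primrec.ite ?_ ?_ ?_
    · exact Primrec.nat_lt.comp (Primrec.fst.comp Primrec.fst)
        (Primrec.list_length.comp (Primrec.fst.comp Primrec.snd))
    · exact Primrec.pair (Primrec.fst.comp (Primrec.snd.comp (Primrec.snd.comp Primrec.snd)))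
        (Primrec.list_cons.comp (Primrec.fst.comp Primrec.snd)
          (Primrec.snd.comp (Primrec.snd.comp (Primrec.snd.comp Primrec.snd))))
    · exact Primrec.pair
        (Primrec.list_append.comp (Primrec.fst.comp Primrec.snd)
          (repFalse_primrec.comp (Primrec.nat_sub.comp (Primrec.fst.comp Primrec.fst)
            (Primrec.list_length.comp (Primrec.fst.comp Primrec.snd)))))
        (Primrec.list_append.comp (np_primrec.comp (Primrec.fst.comp Primrec.fst)
          (Primrec.fst.comp Primrec.snd)) (Primrec.fst.comp (Primrec.snd.comp Primrec.snd)))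
  have h := Primrec.list_rec (α := ℕ × List (List Bool)) (β := List Bool)
    (σ := List Bool × List (List Bool))
    (f := Prod.snd) (g := fun _ => (([], []) : List Bool × List (List Bool)))
    (h := fun a b => if a.1 < b.1.length then (b.2.2.1, b.1 :: b.2.2.2)
      else (b.1 ++ List.replicate (a.1 - b.1.length) false, np a.1 b.1 ++ b.2.1))
    Primrec.snd (Primrec.const _) hh.to₂
  exact (h.of_eq (fun a => rfl)).to₂

theorem free_computable {n : ℕ → ℕ} (hn : Computable n) : Computable (free n) := by
  have hstepc : Computable₂ step := step_primrec.to_comp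
  have hh : Computable₂ (fun (_ : ℕ) (p : ℕ × List (List Bool)) => (step (n p.1) p.2).2) :=
    (Computable.snd.comp (hstepc.comp (hn.comp (Computable.fst.comp Computable.snd))
      (Computable.snd.comp Computable.snd))).to₂
  exact (Computable.nat_rec Computable.id (Computable.const [([] : List Bool)]) hh).of_eq
    (fun i => rfl)

theorem xs_computable {n : ℕ → ℕ} (hn : Computable n) : Computable (xs n) := by
  have hstepc : Computable₂ step := step_primrec.to_comp
  exact Computable.fst.comp (hstepc.comp hn (free_computable hn))

end KCwork

/-- Kraft–Chaitin lemma -/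
theorem stmt6 (n : ℕ → ℕ) (hn : Computable n)
    (hsum : (∑' i : ℕ, ((2 : ENNReal) ^ n i)⁻¹) ≤ 1) :
    ∃ x : ℕ → List Bool, Computable x ∧
      (∀ i : ℕ, (x i).length = n i) ∧
      ∀ i j : ℕ, i ≠ j → ¬ (x i <+: x j) := by
  have hpart : ∀ i, (∑ j ∈ Finset.range (i+1), (2:ℝ≥0)⁻¹ ^ n j) ≤ 1 := by
    intro i
    have h1 : (∑ j ∈ Finset.range (i+1), ((2:ENNReal) ^ n j)⁻¹) ≤ 1 :=
      le_trans (ENNReal.sum_le_tsum _) hsum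
    have h2 : ∀ j : ℕ, ((2:ENNReal) ^ n j)⁻¹ = (((2:ℝ≥0)⁻¹ ^ n j : ℝ≥0) : ENNReal) := by
      intro j
      rw [← ENNReal.coe_two, ← ENNReal.coe_pow,
        ← ENNReal.coe_inv (pow_ne_zero _ two_ne_zero), inv_pow]
    simp only [h2] at h1
    rw [← ENNReal.coe_finset_sum] at h1
    exact_mod_cast h1
  refine ⟨KCwork.xs n, KCwork.xs_computable hn, ?_, ?_⟩
  · intro i
    exact (KCwork.main n hpart (i+1)).2.2.2.2.2 i (Nat.lt_succ_self i)
  · intro i j hij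
    have h := (KCwork.main n hpart (max i j + 1)).2.2.2.2.1 i
      (by omega) j (by omega) hij
    exact h.1
end

section
/- There exists a computably decidable set A of binary strings such that (1) for every n, 3·|A ∩ {0,1}^n| ≥ 2^n, and (2) for every k and every set X of binary strings of length k with 3·|X| ≥ 2^k, there are infinitely many n ≥ k such that for every m with n ≤ m ≤ 2n, the set A represents X at level m. -/
open scoped Classical

/-- `A` represents `X` at level `m`: the strings of length `m` in `A` are exactly
the strings of length `m` having a prefix in `X`. -/
def RepresentsAt (A X : Set (List Bool)) (m : ℕ) : Prop :=
  {l : List Bool | l.length = m ∧ l ∈ A} =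
    {l : List Bool | l.length = m ∧ ∃ x ∈ X, x <+: l}

namespace Stmt9

def enc : List Bool → ℕ
  | [] => 0
  | b :: l => (bif b then 1 else 0) + 2 * enc l

def dec : ℕ → ℕ → List Bool
  | 0, _ => []
  | m+1, s => (s % 2 == 1) :: dec m (s / 2)

theorem length_dec (m s : ℕ) : (dec m s).length = m := by
  induction m generalizing s with
  | zero => rfl
  | succ m ih => simp [dec, ih]

theorem mod_two_mul (s d : ℕ) (hd : 0 < d) : s % (2 * d) = 2 * (s / 2 % d) + s % 2 := by
  conv_lhs => rw [show s = 2 * (s / 2) + s % 2 by omega]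
  rw [Nat.add_mod, Nat.mul_mod_mul_left]
  have h1 : s % 2 % (2 * d) = s % 2 := Nat.mod_eq_of_lt (by omega)
  have h2 : 2 * (s / 2 % d) + s % 2 < 2 * d := by
    have := Nat.mod_lt (s / 2) hd; omega
  rw [h1, Nat.mod_eq_of_lt h2]

theorem enc_dec (m s : ℕ) : enc (dec m s) = s % 2 ^ m := by
  induction m generalizing s with
  | zero => simp [dec, enc, Nat.mod_one]
  | succ m ih =>
      have hd : (0:ℕ) < 2 ^ m := Nat.pow_pos (by norm_num)
      simp only [dec, enc, ih]
      rw [pow_succ, mul_comm (2^m) 2, mod_two_mul s _ hd]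
      rcases Nat.even_or_odd s with h | h
      · have h2 : s % 2 = 0 := Nat.even_iff.1 h
        simp [h2]
      · have h2 : s % 2 = 1 := Nat.odd_iff.1 h
        simp [h2]
        omega

theorem enc_lt (l : List Bool) : enc l < 2 ^ l.length := by
  induction l with
  | nil => simp [enc]
  | cons b l ih => cases b <;> simp [enc, pow_succ] <;> omega

theorem dec_enc (l : List Bool) : dec l.length (enc l) = l := by
  induction l with
  | nil => rfl
  | cons b l ih =>
      cases b
      · simpa [enc, dec] using ih
      · have h1 : (1 + 2 * enc l) % 2 = 1 := by omega
        have h2 : (1 + 2 * enc l) / 2 = enc l := by omega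
        simp only [enc, dec, List.length_cons, cond_true, h1, h2, ih]
        rfl

theorem enc_inj {l l' : List Bool} (h : l.length = l'.length) (he : enc l = enc l') :
    l = l' := by
  have := dec_enc l
  rw [he, h, dec_enc] at this
  exact this.symm

theorem take_enc (l : List Bool) (k : ℕ) : enc (l.take k) = enc l % 2 ^ k := by
  induction l generalizing k with
  | nil => simp [enc]
  | cons b l ih =>
      cases k with
      | zero => simp [enc, Nat.mod_one]
      | succ k =>
          have hd : (0:ℕ) < 2 ^ k := Nat.pow_pos (by norm_num)
          simp only [List.take_succ_cons, enc, ih]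
          rw [pow_succ, mul_comm (2^k) 2, mod_two_mul _ _ hd]
          cases b
          · have : (0 + 2 * enc l) / 2 = enc l := by omega
            simp [this]
          · have : (1 + 2 * enc l) / 2 = enc l := by omega
            simp [this]
            omega

/-! ### Stage machinery -/

def kOf (i : ℕ) : ℕ := (Nat.unpair (Nat.unpair i).1).1
def cOf (i : ℕ) : ℕ := (Nat.unpair (Nat.unpair i).1).2

def nseq : ℕ → ℕ
  | 0 => kOf 0
  | i+1 => max (2 * nseq i + 1) (kOf (i+1))

theorem kOf_le_nseq (i : ℕ) : kOf i ≤ nseq i := by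
  cases i with
  | zero => exact le_refl _
  | succ i => exact le_max_right _ _

theorem nseq_succ_ge (i : ℕ) : 2 * nseq i + 1 ≤ nseq (i+1) := le_max_left _ _

theorem nseq_lt_of_lt {i j : ℕ} (h : i < j) : 2 * nseq i + 1 ≤ nseq j := by
  induction j with
  | zero => omega
  | succ j ih =>
      rcases Nat.lt_succ_iff_lt_or_eq.1 h with h' | h'
      · have := ih h'
        have := nseq_succ_ge j
        omega
      · subst h'; exact nseq_succ_ge i

theorem self_le_nseq (i : ℕ) : i ≤ nseq i := by
  induction i with
  | zero => exact Nat.zero_le _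
  | succ i ih => have := nseq_succ_ge i; omega

/-! ### The decision function -/

def tb (c s : ℕ) : Bool := (c / 2 ^ s) % 2 == 1

def cnt (k c : ℕ) : ℕ :=
  (List.range (2 ^ k)).foldr (fun s r => bif tb c s then r + 1 else r) 0

def valid (k c : ℕ) : Bool := decide (2 ^ k ≤ 3 * cnt k c)

def stagePred (m i : ℕ) : Bool := decide (nseq i ≤ m) && decide (m ≤ 2 * nseq i)

def idx (m : ℕ) : Option ℕ :=
  (List.range (m + 1)).foldr (fun i acc => bif stagePred m i then some i else acc) none

def g (m e : ℕ) : Bool :=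
  (idx m).casesOn true fun i =>
    bif valid (kOf i) (cOf i) then tb (cOf i) (e % 2 ^ kOf i) else true

def f (l : List Bool) : Bool := g l.length (enc l)

theorem foldr_find (p : ℕ → Bool) (l : List ℕ) :
    l.foldr (fun i acc => bif p i then some i else acc) none = l.find? p := by
  induction l with
  | nil => rfl
  | cons a l ih => cases h : p a <;> simp [List.find?_cons, h, ih]

theorem idx_eq_find (m : ℕ) : idx m = (List.range (m + 1)).find? (stagePred m) :=
  foldr_find _ _

theorem foldr_cnt (p : ℕ → Bool) (l : List ℕ) :
    l.foldr (fun s r => bif p s then r + 1 else r) 0 = l.countP p := by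
  induction l with
  | nil => rfl
  | cons a l ih => cases h : p a <;> simp [List.countP_cons, h, ih]

theorem cnt_eq_card (k c : ℕ) :
    cnt k c = ((Finset.range (2 ^ k)).filter (fun s => tb c s = true)).card := by
  rw [cnt, foldr_cnt]
  induction (2 ^ k) with
  | zero => rfl
  | succ N ih =>
      rw [List.range_succ, Finset.range_add_one, List.countP_append,
        Finset.filter_insert]
      by_cases h : tb c N = true
      · rw [if_pos h, Finset.card_insert_of_notMem (by simp), ih]
        simp [List.countP, List.countP.go, h]
      · rw [if_neg h, ih]
        simp [List.countP, List.countP.go, Bool.eq_false_iff.2 h]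

theorem foldr_find_all_false (p : ℕ → Bool) (l : List ℕ) (init : Option ℕ)
    (h : ∀ j ∈ l, p j = false) :
    l.foldr (fun i acc => bif p i then some i else acc) init = init := by
  induction l with
  | nil => rfl
  | cons a l ih =>
      simp only [List.foldr_cons, h a (by simp), cond_false]
      exact ih fun j hj => h j (by simp [hj])

theorem foldr_find_first (p : ℕ → Bool) (N i : ℕ) (hiN : i < N)
    (hlow : ∀ j, j < i → p j = false) (hp : p i = true) (init : Option ℕ) :
    (List.range N).foldr (fun i acc => bif p i then some i else acc) init = some i := by
  induction N generalizing init with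
  | zero => omega
  | succ N ih =>
      rw [List.range_succ, List.foldr_append]
      rcases Nat.lt_succ_iff_lt_or_eq.1 hiN with h' | h'
      · exact ih h' _
      · subst h'
        simp only [List.foldr_cons, List.foldr_nil, hp, cond_true]
        exact foldr_find_all_false _ _ _ fun j hj => hlow j (List.mem_range.1 hj)

theorem idx_eq_some {m i : ℕ} (h1 : nseq i ≤ m) (h2 : m ≤ 2 * nseq i) :
    idx m = some i := by
  have hiN : i < m + 1 := by have := self_le_nseq i; omega
  refine foldr_find_first _ _ _ hiN (fun j hj => ?_) ?_ none
  · have := nseq_lt_of_lt hj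
    simp [stagePred]
    omega
  · simp [stagePred]; omega

theorem idx_spec {m i : ℕ} (h : idx m = some i) : nseq i ≤ m ∧ m ≤ 2 * nseq i := by
  rw [idx_eq_find] at h
  have := List.find?_some h
  simpa [stagePred] using this

/-! ### Counting -/

theorem level_set_eq (m : ℕ) (p : ℕ → Bool) :
    {l : List Bool | l.length = m ∧ p (enc l) = true} =
      dec m '' ↑((Finset.range (2 ^ m)).filter fun s => p s = true) := by
  ext l
  simp only [Set.mem_setOf_eq, Set.mem_image, Finset.coe_filter, Finset.mem_range,
    Set.mem_setOf_eq]
  constructor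
  · rintro ⟨hl, hp⟩
    exact ⟨enc l, ⟨by rw [← hl]; exact enc_lt l, hp⟩, by rw [← hl]; exact dec_enc l⟩
  · rintro ⟨s, ⟨hs, hp⟩, rfl⟩
    exact ⟨length_dec _ _, by rwa [enc_dec, Nat.mod_eq_of_lt hs]⟩

theorem ncard_level (m : ℕ) (p : ℕ → Bool) :
    ({l : List Bool | l.length = m ∧ p (enc l) = true}).ncard =
      ((Finset.range (2 ^ m)).filter fun s => p s = true).card := by
  rw [level_set_eq]
  rw [Set.ncard_image_of_injOn, Set.ncard_coe_finset]
  intro s hs s' hs' he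
  simp only [Finset.coe_filter, Finset.mem_range, Set.mem_setOf_eq] at hs hs'
  have h1 := enc_dec m s
  have h2 := enc_dec m s'
  rw [he, h2, Nat.mod_eq_of_lt hs.1, Nat.mod_eq_of_lt hs'.1] at h1
  exact h1.symm

theorem card_filter_mod (a b : ℕ) (q : ℕ → Bool) :
    ((Finset.range (a * b)).filter fun s => q (s % b) = true).card =
      a * ((Finset.range b).filter fun s => q s = true).card := by
  induction a with
  | zero => simp
  | succ a ih =>
      have : (a + 1) * b = a * b + b := by ring
      rw [this, Finset.range_add_eq_union, Finset.filter_union,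
        Finset.card_union_of_disjoint
          (Finset.disjoint_filter_filter (Finset.disjoint_range_addLeftEmbedding _ _)),
        ih, Finset.filter_map, Finset.card_map]
      have he : ((Finset.range b).filter
          ((fun s => q (s % b) = true) ∘ ⇑(addLeftEmbedding (a * b)))) =
          ((Finset.range b).filter fun s => q s = true) := by
        apply Finset.filter_congr
        intro s hs
        have hs' : s < b := Finset.mem_range.1 hs
        have hmod : (a * b + s) % b = s := by
          rw [Nat.add_comm, Nat.mul_comm, Nat.add_mul_mod_self_left, Nat.mod_eq_of_lt hs']
        simp [addLeftEmbedding_apply, hmod]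
      rw [he]
      ring

/-! ### Density -/

theorem density (m : ℕ) :
    2 ^ m ≤ 3 * ({l : List Bool | l.length = m ∧ f l = true}).ncard := by
  have hset : {l : List Bool | l.length = m ∧ f l = true} =
      {l : List Bool | l.length = m ∧ g m (enc l) = true} := by
    ext l
    simp only [Set.mem_setOf_eq, f]
    constructor <;> rintro ⟨rfl, h⟩ <;> exact ⟨rfl, h⟩
  rw [hset, ncard_level]
  cases hid : idx m with
  | none =>
      have : ∀ s, g m s = true := by intro s; simp [g, hid]
      simp only [this]
      rw [Finset.filter_true_of_mem (by intro s _; trivial), Finset.card_range]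
      omega
  | some i =>
      cases hval : valid (kOf i) (cOf i) with
      | false =>
          have : ∀ s, g m s = true := by intro s; simp [g, hid, hval]
          simp only [this]
          rw [Finset.filter_true_of_mem (by intro s _; trivial), Finset.card_range]
          omega
      | true =>
          have hkm : kOf i ≤ m := le_trans (kOf_le_nseq i) (idx_spec hid).1
          have hg : ∀ s, g m s = tb (cOf i) (s % 2 ^ kOf i) := by
            intro s; simp [g, hid, hval]
          simp only [hg]
          have hm : m - kOf i + kOf i = m := Nat.sub_add_cancel hkm
          rw [← hm, pow_add, card_filter_mod, ← cnt_eq_card]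
          have hv : 2 ^ kOf i ≤ 3 * cnt (kOf i) (cOf i) := of_decide_eq_true hval
          calc 2 ^ (m - kOf i) * 2 ^ kOf i
              ≤ 2 ^ (m - kOf i) * (3 * cnt (kOf i) (cOf i)) :=
                Nat.mul_le_mul_left _ hv
            _ = 3 * (2 ^ (m - kOf i) * cnt (kOf i) (cOf i)) := by ring

/-! ### Bitmask -/

def msk : (ℕ → Bool) → ℕ → ℕ
  | _, 0 => 0
  | p, n+1 => (bif p 0 then 1 else 0) + 2 * msk (fun j => p (j+1)) n

theorem tb_msk (n : ℕ) (p : ℕ → Bool) (s : ℕ) :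
    tb (msk p n) s = (decide (s < n) && p s) := by
  induction n generalizing p s with
  | zero => simp [msk, tb, Nat.zero_div]
  | succ n ih =>
      cases s with
      | zero =>
          simp only [msk, tb, pow_zero, Nat.div_one]
          cases h : p 0 <;> simp [h] <;> omega
      | succ s =>
          have hsh : tb ((bif p 0 then 1 else 0) + 2 * msk (fun j => p (j+1)) n) (s+1)
              = tb (msk (fun j => p (j+1)) n) s := by
            have h2 : ((bif p 0 then 1 else 0) + 2 * msk (fun j => p (j+1)) n) / 2
                = msk (fun j => p (j+1)) n := by cases p 0 <;> simp <;> omega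
            simp only [tb, pow_succ, mul_comm (2 ^ s) 2]
            rw [← Nat.div_div_eq_div_mul, h2]
          rw [msk, hsh, ih]
          simp

/-! ### Representation -/

theorem represents (k : ℕ) (X : Set (List Bool)) (hX : ∀ x ∈ X, x.length = k)
    (hcard : 2 ^ k ≤ 3 * X.ncard) (N : ℕ) :
    ∃ n : ℕ, N ≤ n ∧ k ≤ n ∧ ∀ m : ℕ, n ≤ m → m ≤ 2 * n →
      {l : List Bool | l.length = m ∧ f l = true} =
        {l : List Bool | l.length = m ∧ ∃ x ∈ X, x <+: l} := by
  classical
  have hfin : X.Finite := by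
    refine Set.Finite.subset ((Set.finite_Iio (2 ^ k)).image (dec k)) ?_
    intro x hx
    exact ⟨enc x, by rw [← hX x hx]; exact enc_lt x, by rw [← hX x hx]; exact dec_enc x⟩
  set F := hfin.toFinset with hF
  set S := F.image enc with hS
  have hmemF : ∀ x, x ∈ F ↔ x ∈ X := fun x => hfin.mem_toFinset
  have hScard : S.card = F.card := by
    apply Finset.card_image_of_injOn
    intro x hx y hy he
    exact enc_inj (by rw [hX x ((hmemF x).1 hx), hX y ((hmemF y).1 hy)]) he
  have hncard : X.ncard = F.card := Set.ncard_eq_toFinset_card X hfin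
  have hSlt : ∀ s ∈ S, s < 2 ^ k := by
    intro s hs
    obtain ⟨x, hxF, rfl⟩ := Finset.mem_image.1 hs
    rw [← hX x ((hmemF x).1 hxF)]
    exact enc_lt x
  set c := msk (fun s => decide (s ∈ S)) (2 ^ k) with hc
  have htb : ∀ s, tb c s = (decide (s < 2 ^ k) && decide (s ∈ S)) := fun s => tb_msk _ _ _
  have hcnt : cnt k c = S.card := by
    rw [cnt_eq_card]
    congr 1
    ext s
    simp only [Finset.mem_filter, Finset.mem_range, htb, Bool.and_eq_true, decide_eq_true_eq]
    exact ⟨fun h => h.2.2, fun h => ⟨hSlt s h, hSlt s h, h⟩⟩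
  have hvalid : valid k c = true := by
    rw [valid, decide_eq_true_eq, hcnt, hScard, ← hncard]
    exact hcard
  set j := Nat.pair (Nat.pair k c) N with hj
  have hk : kOf j = k := by simp [kOf, hj]
  have hcj : cOf j = c := by simp [cOf, hj]
  refine ⟨nseq j, ?_, ?_, ?_⟩
  · exact le_trans (Nat.right_le_pair _ _) (self_le_nseq j)
  · rw [← hk]; exact kOf_le_nseq j
  intro m hm1 hm2
  have hid : idx m = some j := idx_eq_some hm1 hm2
  have hkm : k ≤ m := le_trans (by rw [← hk]; exact kOf_le_nseq j) hm1
  have hf : ∀ l : List Bool, l.length = m → (f l = true ↔ l.take k ∈ X) := by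
    intro l hlen
    have hlt : enc (l.take k) < 2 ^ k := by
      have := enc_lt (l.take k)
      rwa [List.length_take, min_eq_left (by omega)] at this
    rw [show f l = g m (enc l) by rw [f, hlen]]
    simp only [g, hid, hk, hcj, hvalid, cond_true]
    rw [← take_enc, htb]
    rw [show decide (enc (l.take k) < 2 ^ k) = true from decide_eq_true hlt]
    simp only [Bool.true_and, decide_eq_true_eq]
    constructor
    · intro hmem
      obtain ⟨x, hxF, hxe⟩ := Finset.mem_image.1 hmem
      have hxX : x ∈ X := (hmemF x).1 hxF
      have hxt : x = l.take k :=
        enc_inj (by rw [hX x hxX, List.length_take]; omega) hxe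
      exact hxt ▸ hxX
    · intro hmem
      exact Finset.mem_image.2 ⟨l.take k, (hmemF _).2 hmem, rfl⟩
  ext l
  simp only [Set.mem_setOf_eq]
  constructor
  · rintro ⟨hlen, hfl⟩
    exact ⟨hlen, l.take k, (hf l hlen).1 hfl, List.take_prefix k l⟩
  · rintro ⟨hlen, x, hxX, hpre⟩
    refine ⟨hlen, (hf l hlen).2 ?_⟩
    have : x = l.take x.length := List.prefix_iff_eq_take.1 hpre
    rw [hX x hxX] at this
    exact this ▸ hxX

/-! ### Computability -/

theorem pow_primrec : Primrec₂ (fun a b : ℕ => a ^ b) :=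
  Primrec₂.unpaired'.1 Nat.Primrec.pow

theorem pow2_primrec : Primrec (fun k : ℕ => 2 ^ k) :=
  pow_primrec.comp (Primrec.const 2) Primrec.id

theorem enc_primrec : Primrec enc := by
  have : Primrec fun l : List Bool =>
      l.foldr (fun b r => (fun (_ : List Bool) (p : Bool × ℕ) =>
        (bif p.1 then 1 else 0) + 2 * p.2) l (b, r)) 0 :=
    Primrec.list_foldr Primrec.id (Primrec.const 0)
      (Primrec.nat_add.comp₂
        (Primrec.cond (Primrec.fst.comp Primrec.snd) (Primrec.const 1) (Primrec.const 0)).to₂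
        ((Primrec.nat_mul.comp (Primrec.const 2) (Primrec.snd.comp Primrec.snd)).to₂))
  refine this.of_eq fun l => ?_
  induction l with
  | nil => rfl
  | cons b l ih => simp [enc, ih]

theorem kOf_primrec : Primrec kOf :=
  Primrec.fst.comp (Primrec.unpair.comp (Primrec.fst.comp Primrec.unpair))

theorem cOf_primrec : Primrec cOf :=
  Primrec.snd.comp (Primrec.unpair.comp (Primrec.fst.comp Primrec.unpair))

theorem nseq_primrec : Primrec nseq := by
  have h : Primrec (Nat.rec (motive := fun _ => ℕ) (kOf 0)
      (fun i r => max (2 * r + 1) (kOf (i+1)))) := by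
    refine Primrec.nat_rec₁ _ ?_
    exact Primrec.nat_max.comp₂
      ((Primrec.succ.comp (Primrec.nat_mul.comp (Primrec.const 2) Primrec.snd)).to₂)
      ((kOf_primrec.comp (Primrec.succ.comp Primrec.fst)).to₂)
  refine h.of_eq fun i => ?_
  induction i with
  | zero => rfl
  | succ i ih => simp [nseq, ← ih]

theorem tb_primrec : Primrec₂ tb := by
  unfold tb
  exact Primrec.beq.comp₂
    ((Primrec.nat_mod.comp
        (Primrec.nat_div.comp Primrec.fst (pow2_primrec.comp Primrec.snd))
        (Primrec.const 2)).to₂)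
    (Primrec₂.const 1)

theorem cnt_primrec : Primrec₂ cnt := by
  unfold cnt
  have : Primrec fun p : ℕ × ℕ =>
      (List.range (2 ^ p.1)).foldr (fun s r => (fun (p : ℕ × ℕ) (q : ℕ × ℕ) =>
        bif tb p.2 q.1 then q.2 + 1 else q.2) p (s, r)) 0 := by
    refine Primrec.list_foldr (h := fun (p : ℕ × ℕ) (q : ℕ × ℕ) =>
        bif tb p.2 q.1 then q.2 + 1 else q.2)
      (Primrec.list_range.comp (pow2_primrec.comp Primrec.fst))
      (Primrec.const (0:ℕ)) ?_
    exact (Primrec.cond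
      (tb_primrec.comp (Primrec.snd.comp Primrec.fst) (Primrec.fst.comp Primrec.snd))
      (Primrec.succ.comp (Primrec.snd.comp Primrec.snd))
      (Primrec.snd.comp Primrec.snd)).to₂
  exact this.to₂

theorem valid_primrec : Primrec₂ valid := by
  unfold valid
  exact (Primrec.nat_le.comp (pow2_primrec.comp Primrec.fst)
    (Primrec.nat_mul.comp (Primrec.const 3) (cnt_primrec.comp Primrec.fst Primrec.snd))).decide.to₂

theorem stagePred_primrec : Primrec₂ stagePred := by
  unfold stagePred
  have h1 : Primrec₂ fun m i : ℕ => decide (nseq i ≤ m) :=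
    (Primrec.nat_le.comp (nseq_primrec.comp Primrec.snd) Primrec.fst).decide.to₂
  have h2 : Primrec₂ fun m i : ℕ => decide (m ≤ 2 * nseq i) :=
    (Primrec.nat_le.comp Primrec.fst
      (Primrec.nat_mul.comp (Primrec.const 2) (nseq_primrec.comp Primrec.snd))).decide.to₂
  exact (Primrec.cond (h1.comp Primrec.fst Primrec.snd)
    (h2.comp Primrec.fst Primrec.snd) (Primrec.const false)).to₂.of_eq
    (fun m i => by cases hh : decide (nseq i ≤ m) <;> simp [hh, Bool.and_eq_true])

theorem idx_primrec : Primrec idx := by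
  unfold idx
  have : Primrec fun m : ℕ =>
      (List.range (m + 1)).foldr (fun i acc => (fun (m : ℕ) (q : ℕ × Option ℕ) =>
        bif stagePred m q.1 then some q.1 else q.2) m (i, acc)) none := by
    refine Primrec.list_foldr (h := fun (m : ℕ) (q : ℕ × Option ℕ) =>
        bif stagePred m q.1 then some q.1 else q.2)
      (Primrec.list_range.comp Primrec.succ)
      (Primrec.const (none : Option ℕ)) ?_
    exact (Primrec.cond
      (stagePred_primrec.comp Primrec.fst (Primrec.fst.comp Primrec.snd))
      (Primrec.option_some.comp (Primrec.fst.comp Primrec.snd))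
      (Primrec.snd.comp Primrec.snd)).to₂
  exact this

theorem g_primrec : Primrec₂ g := by
  unfold g
  refine (Primrec.option_casesOn (o := fun p : ℕ × ℕ => idx p.1)
    (f := fun _ : ℕ × ℕ => true)
    (g := fun (p : ℕ × ℕ) (i : ℕ) =>
      bif valid (kOf i) (cOf i) then tb (cOf i) (p.2 % 2 ^ kOf i) else true)
    (idx_primrec.comp Primrec.fst) (Primrec.const true) ?_).to₂
  exact (Primrec.cond
    (valid_primrec.comp (kOf_primrec.comp Primrec.snd) (cOf_primrec.comp Primrec.snd))
    (tb_primrec.comp (cOf_primrec.comp Primrec.snd)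
      (Primrec.nat_mod.comp (Primrec.snd.comp Primrec.fst)
        (pow2_primrec.comp (kOf_primrec.comp Primrec.snd))))
    (Primrec.const true)).to₂

theorem f_primrec : Primrec f := by
  unfold f
  exact g_primrec.comp Primrec.list_length enc_primrec

theorem f_computablePred : ComputablePred fun l : List Bool => f l = true :=
  ComputablePred.computable_iff.2 ⟨f, f_primrec.to_comp, rfl⟩

end Stmt9

theorem stmt9 :
    ∃ A : Set (List Bool), ComputablePred (· ∈ A) ∧
      (∀ n : ℕ, 2 ^ n ≤ 3 * ({x | x ∈ A ∧ x.length = n} : Set (List Bool)).ncard) ∧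
      ∀ (k : ℕ) (X : Set (List Bool)), (∀ x ∈ X, x.length = k) →
        2 ^ k ≤ 3 * X.ncard →
        ∀ N : ℕ, ∃ n : ℕ, N ≤ n ∧ k ≤ n ∧
          ∀ m : ℕ, n ≤ m → m ≤ 2 * n → RepresentsAt A X m := by
  refine ⟨{l | Stmt9.f l = true}, Stmt9.f_computablePred, ?_, ?_⟩
  · intro n
    have hset : ({x | x ∈ {l | Stmt9.f l = true} ∧ x.length = n} : Set (List Bool)) =
        {l | l.length = n ∧ Stmt9.f l = true} := by
      ext l; simp [and_comm]
    rw [hset]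
    exact Stmt9.density n
  · intro k X hX hcard N
    obtain ⟨n, h1, h2, h3⟩ := Stmt9.represents k X hX hcard N
    refine ⟨n, h1, h2, fun m hm1 hm2 => ?_⟩
    show {l : List Bool | l.length = m ∧ l ∈ {l | Stmt9.f l = true}} = _
    exact h3 m hm1 hm2
end

section
/- Density lemma: Let X be a set of binary strings of length k with 3·|X| ≥ 2^k, and let A be a set of binary strings such that there are infinitely many n ≥ k with the property that A represents X at level m for every m with n ≤ m ≤ 2n. Then for every optimal prefix-free decompressor D whose domain is a subset of A, there exists a string p in the domain of D such that either p has a prefix in X or p is a prefix of some element of X. -/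
open scoped Classical

namespace Stmt10Aux

/-- Primrec-friendly binary size. -/
def sz (n : ℕ) : ℕ := ((List.range (n+1)).filter (fun i => decide (2^i ≤ n))).length

lemma filter_lt_length (s N : ℕ) :
    ((List.range N).filter (fun i => decide (i < s))).length = min s N := by
  induction N with
  | zero => simp
  | succ N ih =>
    rw [List.range_succ, List.filter_append, List.length_append, ih]
    by_cases h : N < s <;> simp [h] <;> omega

lemma sz_eq (n : ℕ) : sz n = Nat.size n := by
  have h1 : (fun i => decide (2^i ≤ n)) = (fun i => decide (i < Nat.size n)) := by
    funext i; simp [Nat.lt_size]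
  have h2 : Nat.size n ≤ n + 1 :=
    Nat.size_le.2 (lt_of_lt_of_le (Nat.lt_two_pow_self (n := n))
      (Nat.pow_le_pow_right (by norm_num) (Nat.le_succ n)))
  rw [sz, h1, filter_lt_length]
  omega

def bitsOf (j n : ℕ) : List Bool := (List.range j).map (fun i => n.testBit i)

def enc (x : List Bool) : List Bool :=
  List.replicate (sz x.length) true ++ false :: (bitsOf (sz x.length) x.length ++ x)

lemma length_enc (x : List Bool) : (enc x).length = 2 * sz x.length + 1 + x.length := by
  simp [enc, bitsOf]; omega

lemma bitsOf_inj {j m n : ℕ} (hm : m < 2^j) (hn : n < 2^j) (h : bitsOf j m = bitsOf j n) :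
    m = n := by
  apply Nat.eq_of_testBit_eq
  intro i
  by_cases hi : i < j
  · exact List.map_inj_left.1 h i (List.mem_range.2 hi)
  · rw [Nat.testBit_lt_two_pow (lt_of_lt_of_le hm (Nat.pow_le_pow_right (by norm_num) (by omega))),
      Nat.testBit_lt_two_pow (lt_of_lt_of_le hn (Nat.pow_le_pow_right (by norm_num) (by omega)))]

lemma header_pf : ∀ (a b : ℕ) (s t : List Bool),
    (List.replicate a true ++ false :: s) <+: (List.replicate b true ++ false :: t) →
      a = b ∧ s <+: t := by
  intro a
  induction a with
  | zero =>
    intro b s t h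
    cases b with
    | zero => simpa using h
    | succ b => simp [List.replicate_succ, List.cons_prefix_cons] at h
  | succ a ih =>
    intro b s t h
    cases b with
    | zero => simp [List.replicate_succ, List.cons_prefix_cons] at h
    | succ b =>
      simp only [List.replicate_succ, List.cons_append, List.cons_prefix_cons] at h
      obtain ⟨hab, hst⟩ := ih b s t h.2
      exact ⟨by omega, hst⟩

lemma enc_prefix {x y : List Bool} (h : enc x <+: enc y) : x = y := by
  obtain ⟨hj, hp⟩ := header_pf _ _ _ _ h
  obtain ⟨r, hr⟩ := hp
  rw [List.append_assoc] at hr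
  have hlen : (bitsOf (sz x.length) x.length).length = (bitsOf (sz y.length) y.length).length := by
    simp [bitsOf, hj]
  obtain ⟨h1, h2⟩ := List.append_inj hr hlen
  have hxl : x.length < 2 ^ sz x.length := by rw [sz_eq]; exact Nat.lt_size_self _
  have hyl : y.length < 2 ^ sz x.length := by rw [hj, sz_eq]; exact Nat.lt_size_self _
  have hxy : x.length = y.length := by
    apply bitsOf_inj hxl hyl
    rw [h1, hj]
  have : r = [] := by
    have h3 := congrArg List.length h2
    simp only [List.length_append] at h3
    exact List.eq_nil_of_length_eq_zero (by omega)
  rw [this, List.append_nil] at h2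
  exact h2

def payload (y : List Bool) : List Bool := y.drop (2 * (y.idxOf false) + 1)

def decf (y : List Bool) : Option (List Bool) :=
  if enc (payload y) = y then some (payload y) else none

lemma indexOf_header (j : ℕ) (r : List Bool) :
    (List.replicate j true ++ false :: r).idxOf false = j := by
  induction j with
  | zero => simp
  | succ j ih =>
    rw [List.replicate_succ, List.cons_append, List.idxOf_cons_ne _ (by simp), ih]

lemma payload_enc (x : List Bool) : payload (enc x) = x := by
  unfold payload enc
  rw [indexOf_header]
  have heq : List.replicate (sz x.length) true ++
      false :: (bitsOf (sz x.length) x.length ++ x) =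
      (List.replicate (sz x.length) true ++ (false :: bitsOf (sz x.length) x.length)) ++ x := by
    simp
  rw [heq, List.drop_left']
  simp [bitsOf]; omega

lemma decf_enc (x : List Bool) : decf (enc x) = some x := by
  simp [decf, payload_enc]

def dec : List Bool →. List Bool := fun y => (decf y : Part (List Bool))

lemma mem_dec (u : List Bool) : u ∈ dec (enc u) := by
  simp [dec, decf_enc]

lemma dec_dom {y : List Bool} (h : y ∈ dec.Dom) : ∃ x, enc x = y := by
  obtain ⟨u, hu⟩ := (PFun.mem_dom _ _).1 h
  simp only [dec, Part.mem_ofOption] at hu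
  unfold decf at hu
  split at hu
  · exact ⟨payload y, by assumption⟩
  · simp at hu

lemma primrec_pow2 : Primrec (fun i : ℕ => 2 ^ i) := by
  have h := Primrec.nat_iterate (Primrec.id (α := ℕ)) (Primrec.const 1)
    ((Primrec.nat_double.comp Primrec.snd).to₂ (α := ℕ) (β := ℕ))
  have key : ∀ i : ℕ, (fun b => 2 * b)^[i] 1 = 2 ^ i := by
    intro i
    induction i with
    | zero => rfl
    | succ i ih => rw [Function.iterate_succ_apply', ih, pow_succ]; ring
  exact h.of_eq fun i => key i

lemma filter_eq_flatMap {α : Type*} (p : α → Bool) (l : List α) :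
    l.filter p = l.flatMap (fun a => if p a then [a] else []) := by
  induction l with
  | nil => rfl
  | cons a l ih =>
    rw [List.filter_cons, List.flatMap_cons, ← ih]
    by_cases h : p a <;> simp [h]

lemma primrec_sz : Primrec sz := by
  have hg : Primrec₂ (fun (n i : ℕ) => if 2^i ≤ n then [i] else []) :=
    Primrec.ite (Primrec.nat_le.comp (primrec_pow2.comp Primrec.snd) Primrec.fst)
      (Primrec.list_cons.comp Primrec.snd (Primrec.const [])) (Primrec.const [])
  have h : Primrec (fun n => ((List.range (n+1)).flatMap
      (fun i => if 2^i ≤ n then [i] else [])).length) :=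
    Primrec.list_length.comp (Primrec.list_flatMap (Primrec.list_range.comp Primrec.succ) hg)
  refine h.of_eq fun n => ?_
  rw [sz, filter_eq_flatMap]
  simp only [decide_eq_true_eq]

lemma primrec_testBit : Primrec₂ Nat.testBit := by
  have h : Primrec₂ (fun (n i : ℕ) => decide (n / 2^i % 2 = 1)) :=
    PrimrecPred.decide (Primrec.eq.comp
      (Primrec.nat_mod.comp (Primrec.nat_div.comp Primrec.fst (primrec_pow2.comp Primrec.snd))
        (Primrec.const 2)) (Primrec.const 1))
  exact h.of_eq fun n i => (Nat.testBit_eq_decide_div_mod_eq).symm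

lemma primrec_enc : Primrec enc := by
  have hlen : Primrec (fun x : List Bool => x.length) := Primrec.list_length
  have hj : Primrec (fun x : List Bool => sz x.length) := primrec_sz.comp hlen
  have hpart1 : Primrec (fun x : List Bool => (List.range (sz x.length)).map (fun _ => true)) :=
    Primrec.list_map (Primrec.list_range.comp hj)
      ((Primrec.const true).comp Primrec.fst).to₂
  have hpart2 : Primrec (fun x : List Bool => bitsOf (sz x.length) x.length) :=
    Primrec.list_map (Primrec.list_range.comp hj)
      (primrec_testBit.comp (hlen.comp (Primrec.fst (β := ℕ))) Primrec.snd).to₂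
  have h : Primrec (fun x : List Bool =>
      ((List.range (sz x.length)).map (fun _ => true)) ++
        false :: (bitsOf (sz x.length) x.length ++ x)) :=
    Primrec.list_append.comp hpart1
      (Primrec.list_cons.comp (Primrec.const false)
        (Primrec.list_append.comp hpart2 Primrec.id))
  refine h.of_eq fun x => ?_
  unfold enc
  congr 1
  rw [List.map_const', List.length_range]

lemma primrec_payload : Primrec payload := by
  have hidx : Primrec (fun y : List Bool => 2 * (y.idxOf false) + 1) :=
    Primrec.succ.comp (Primrec.nat_double.comp
      (Primrec.list_idxOf.comp (Primrec.const false) Primrec.id))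
  have h : Primrec (fun y : List Bool =>
      (List.range (y.length - (2 * (y.idxOf false) + 1))).map
        (fun t => y.getD ((2 * (y.idxOf false) + 1) + t) false)) :=
    Primrec.list_map
      (Primrec.list_range.comp (Primrec.nat_sub.comp Primrec.list_length hidx))
      (((Primrec.list_getD false).comp Primrec.fst
        (Primrec.nat_add.comp (hidx.comp Primrec.fst) Primrec.snd)).to₂)
  refine h.of_eq fun y => ?_
  unfold payload
  generalize 2 * (y.idxOf false) + 1 = i
  apply List.ext_getElem
  · simp
  · intro t h1 h2
    simp only [List.length_map, List.length_range] at h1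
    simp only [List.getElem_map, List.getElem_range, List.getElem_drop,
      List.getD_eq_getElem?_getD, List.getElem?_eq_getElem (by omega : i + t < y.length),
      Option.getD_some]

lemma primrec_decf : Primrec decf := by
  have hc : PrimrecPred (fun y : List Bool => enc (payload y) = y) :=
    Primrec.eq.comp (primrec_enc.comp primrec_payload) Primrec.id
  exact Primrec.ite hc (Primrec.option_some.comp primrec_payload) (Primrec.const none)

lemma partrec_dec : Partrec dec := Computable.ofOption primrec_decf.to_comp

lemma pow_big (a : ℕ) : ∀ j, a + 4 ≤ j → 2*j + a + 1 ≤ 2^j := by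
  intro j
  induction j with
  | zero => omega
  | succ j ih =>
    intro hj
    rcases Nat.lt_or_ge j (a+4) with h | h
    · have hj' : j = a + 3 := by omega
      subst hj'
      have h1 : a + 1 ≤ 2^a := Nat.lt_two_pow_self (n := a)
      have h2 : 2^(a+3+1) = 16 * 2^a := by ring
      omega
    · have h1 := ih h
      have h2 : 2^(j+1) = 2 * 2^j := by ring
      omega

lemma size_small (a n : ℕ) (h : 2^(a+6) ≤ n) : 2 * Nat.size n + a ≤ n := by
  set j := Nat.size n with hj
  have hj7 : a + 7 ≤ j := by
    by_contra hc
    have h2 : Nat.size n ≤ a + 6 := by omega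
    have := Nat.size_le.1 h2
    omega
  have h1 : 2^(j-1) ≤ n := by
    by_contra hc
    have : Nat.size n ≤ j - 1 := Nat.size_le.2 (by omega)
    omega
  have h2 : 2*(j-1) + (a+2) + 1 ≤ 2^(j-1) := pow_big (a+2) (j-1) (by omega)
  omega

/-- Finset of all binary strings of length `n`. -/
noncomputable def lenF (n : ℕ) : Finset (List Bool) :=
  (Finset.univ : Finset (List.Vector Bool n)).map ⟨fun v : List.Vector Bool n => v.1, fun _ _ h => Subtype.ext h⟩

lemma mem_lenF {l : List Bool} {n : ℕ} : l ∈ lenF n ↔ l.length = n := by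
  simp only [lenF, Finset.mem_map, Finset.mem_univ, true_and, Function.Embedding.coeFn_mk]
  constructor
  · rintro ⟨v, rfl⟩; exact v.2
  · intro h; exact ⟨⟨l, h⟩, rfl⟩

lemma card_lenF (n : ℕ) : (lenF n).card = 2^n := by
  have h : (lenF n).card = Fintype.card (List.Vector Bool n) := by
    rw [lenF, Finset.card_map]
    exact Finset.card_univ (α := List.Vector Bool n)
  rw [h, card_vector, Fintype.card_bool]

end Stmt10Aux

lemma stmt10_dec_prefixFree : PrefixFreeSet Stmt10Aux.dec.Dom := by
  intro p hp q hq hpq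
  obtain ⟨x, rfl⟩ := Stmt10Aux.dec_dom hp
  obtain ⟨x', rfl⟩ := Stmt10Aux.dec_dom hq
  rw [Stmt10Aux.enc_prefix hpq]

lemma stmt10_cpx_dec_le (u : List Bool) :
    Cpx Stmt10Aux.dec u ≤ ((2 * Stmt10Aux.sz u.length + 1 + u.length : ℕ) : ℕ∞) := by
  have h : ((Stmt10Aux.enc u).length : ℕ∞) ∈
      {n : ℕ∞ | ∃ y : List Bool, u ∈ Stmt10Aux.dec y ∧ (y.length : ℕ∞) = n} :=
    ⟨Stmt10Aux.enc u, Stmt10Aux.mem_dec u, rfl⟩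
  have := sInf_le h
  rwa [Stmt10Aux.length_enc] at this

/-- Density lemma -/
theorem stmt10 (k : ℕ) (X : Set (List Bool)) (hX : ∀ x ∈ X, x.length = k)
    (hXbig : 2 ^ k ≤ 3 * X.ncard)
    (A : Set (List Bool))
    (hrep : ∀ N : ℕ, ∃ n : ℕ, N ≤ n ∧ k ≤ n ∧
      ∀ m : ℕ, n ≤ m → m ≤ 2 * n → RepresentsAt A X m)
    (D : List Bool →. List Bool) (hD : OptimalPrefix D) (hdom : D.Dom ⊆ A) :
    ∃ p ∈ D.Dom, (∃ x ∈ X, x <+: p) ∨ (∃ x ∈ X, p <+: x) := by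
  classical
  obtain ⟨hDp, hDpf, hopt⟩ := hD
  obtain ⟨c, hc⟩ := hopt Stmt10Aux.dec Stmt10Aux.partrec_dec stmt10_dec_prefixFree
  obtain ⟨n₀, hn₀N, hn₀k, hrep3⟩ := hrep (2^(c+9) + k + 1)
  have hp9 : 0 < 2^(c+9) := pow_pos (by norm_num) _
  have hn₀1 : 1 ≤ n₀ := by omega
  -- X is finite
  have hXfin : X.Finite := Set.Finite.subset (Stmt10Aux.lenF k).finite_toSet
    (fun x hx => Stmt10Aux.mem_lenF.2 (hX x hx))
  set Xf := hXfin.toFinset with hXfdef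
  have hmemXf : ∀ x, x ∈ Xf ↔ x ∈ X := fun x => hXfin.mem_toFinset
  have hXcard : X.ncard = Xf.card := Set.ncard_eq_toFinset_card X hXfin
  set Tf := (Stmt10Aux.lenF (n₀+1)).filter (fun u => ∃ x ∈ X, x <+: u) with hTfdef
  have hk : k ≤ n₀ + 1 := by omega
  -- lower bound on the number of strings of length n₀+1 with a prefix in X
  have hlow : Xf.card * 2^((n₀+1)-k) ≤ Tf.card := by
    have hmaps : ∀ p ∈ Xf ×ˢ Stmt10Aux.lenF ((n₀+1)-k),
        (fun p : List Bool × List Bool => p.1 ++ p.2) p ∈ Tf := by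
      rintro ⟨x, v⟩ hp
      rw [Finset.mem_product] at hp
      obtain ⟨hx, hv⟩ := hp
      have hxX : x ∈ X := (hmemXf x).1 hx
      have hxlen := hX x hxX
      have hvlen := Stmt10Aux.mem_lenF.1 hv
      refine Finset.mem_filter.2 ⟨Stmt10Aux.mem_lenF.2 ?_, ⟨x, hxX, List.prefix_append x v⟩⟩
      simp only [List.length_append, hxlen, hvlen]
      omega
    have hinj : Set.InjOn (fun p : List Bool × List Bool => p.1 ++ p.2)
        ↑(Xf ×ˢ Stmt10Aux.lenF ((n₀+1)-k)) := by
      rintro ⟨x1, v1⟩ h1 ⟨x2, v2⟩ h2 heq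
      rw [Finset.mem_coe, Finset.mem_product] at h1 h2
      have hl1 := hX x1 ((hmemXf x1).1 h1.1)
      have hl2 := hX x2 ((hmemXf x2).1 h2.1)
      obtain ⟨e1, e2⟩ := List.append_inj heq (hl1.trans hl2.symm)
      simp only [Prod.mk.injEq]
      exact ⟨e1, e2⟩
    have := Finset.card_le_card_of_injOn _ hmaps hinj
    rwa [Finset.card_product, Stmt10Aux.card_lenF] at this
  -- there is a string of length n₀+1 with a prefix in X all of whose descriptions
  -- have length at least n₀
  have claim : ∃ u : List Bool, u.length = n₀ + 1 ∧ (∃ x ∈ X, x <+: u) ∧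
      ∀ y, u ∈ D y → n₀ ≤ y.length := by
    by_contra hcl
    push_neg at hcl
    have hdesc : ∀ u ∈ Tf, ∃ y, u ∈ D y ∧ y.length < n₀ := by
      intro u hu
      rw [hTfdef, Finset.mem_filter] at hu
      exact hcl u (Stmt10Aux.mem_lenF.1 hu.1) hu.2
    choose! desc hd1 hd2 using hdesc
    have hupper : Tf.card ≤ 2^(n₀-1) := by
      rw [← Stmt10Aux.card_lenF (n₀-1)]
      apply Finset.card_le_card_of_injOn
        (fun u => desc u ++ List.replicate ((n₀-1) - (desc u).length) false)
      · intro u hu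
        apply Stmt10Aux.mem_lenF.2
        have := hd2 u hu
        simp only [List.length_append, List.length_replicate]
        omega
      · intro u hu u' hu' heq
        rw [Finset.mem_coe] at hu hu'
        have hu1 := hd1 u hu
        have hu1' := hd1 u' hu'
        simp only at heq
        have p1 : desc u <+: desc u' ++ List.replicate ((n₀-1) - (desc u').length) false := by
          rw [← heq]; exact List.prefix_append _ _
        have p2 : desc u' <+: desc u' ++ List.replicate ((n₀-1) - (desc u').length) false :=
          List.prefix_append _ _
        have hdomu : desc u ∈ D.Dom := (PFun.mem_dom D _).2 ⟨u, hu1⟩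
        have hdomu' : desc u' ∈ D.Dom := (PFun.mem_dom D _).2 ⟨u', hu1'⟩
        have hdd : desc u = desc u' := by
          rcases List.prefix_or_prefix_of_prefix p1 p2 with h | h
          · exact hDpf _ hdomu _ hdomu' h
          · exact (hDpf _ hdomu' _ hdomu h).symm
        exact Part.mem_unique hu1 (hdd ▸ hu1')
    have h3X : 2^k ≤ 3 * Xf.card := by rwa [hXcard] at hXbig
    have hpow : 2^(n₀+1) = 2^k * 2^((n₀+1)-k) := by
      rw [← pow_add]; congr 1; omega
    have hchain : 2^(n₀+1) ≤ 3 * 2^(n₀-1) := by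
      calc 2^(n₀+1) = 2^k * 2^((n₀+1)-k) := hpow
        _ ≤ (3 * Xf.card) * 2^((n₀+1)-k) := Nat.mul_le_mul_right _ h3X
        _ = 3 * (Xf.card * 2^((n₀+1)-k)) := by ring
        _ ≤ 3 * Tf.card := Nat.mul_le_mul_left _ hlow
        _ ≤ 3 * 2^(n₀-1) := Nat.mul_le_mul_left _ hupper
    have h4 : 2^(n₀+1) = 4 * 2^(n₀-1) := by
      rw [show n₀ + 1 = (n₀-1)+2 by omega, pow_add]; ring
    have hpos : 0 < 2^(n₀-1) := pow_pos (by norm_num) _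
    omega
  obtain ⟨u, hulen, hupfx, hlowb⟩ := claim
  -- upper bound on the complexity of u
  have hub : Cpx D u ≤ ((2 * Stmt10Aux.sz (n₀+1) + 1 + (n₀+1) + c : ℕ) : ℕ∞) := by
    calc Cpx D u ≤ Cpx Stmt10Aux.dec u + (c : ℕ∞) := hc u
      _ ≤ ((2 * Stmt10Aux.sz u.length + 1 + u.length : ℕ) : ℕ∞) + (c : ℕ∞) :=
          add_le_add_left (stmt10_cpx_dec_le u) _
      _ = ((2 * Stmt10Aux.sz (n₀+1) + 1 + (n₀+1) + c : ℕ) : ℕ∞) := by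
          rw [hulen]; push_cast; ring
  have hB2 : 2 * Stmt10Aux.sz (n₀+1) + 1 + (n₀+1) + c ≤ 2 * n₀ := by
    have hs := Stmt10Aux.size_small (c+3) (n₀+1)
      (show 2^(c+9) ≤ n₀+1 by omega)
    rw [Stmt10Aux.sz_eq]
    omega
  -- extract a short description
  have hex : ∃ y, u ∈ D y ∧ y.length ≤ 2 * Stmt10Aux.sz (n₀+1) + 1 + (n₀+1) + c := by
    by_contra hno
    push_neg at hno
    have hge : ((2 * Stmt10Aux.sz (n₀+1) + 1 + (n₀+1) + c + 1 : ℕ) : ℕ∞) ≤ Cpx D u := by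
      apply le_sInf
      rintro n ⟨y, hy, rfl⟩
      exact_mod_cast (by have := hno y hy; omega :
        2 * Stmt10Aux.sz (n₀+1) + 1 + (n₀+1) + c + 1 ≤ y.length)
    have := hge.trans hub
    have := Nat.cast_le.1 this
    omega
  obtain ⟨y, hy, hyB⟩ := hex
  have hylow : n₀ ≤ y.length := hlowb y hy
  have hyhigh : y.length ≤ 2 * n₀ := le_trans hyB hB2
  have hyDom : y ∈ D.Dom := (PFun.mem_dom D y).2 ⟨u, hy⟩
  have hyA : y ∈ A := hdom hyDom
  have hre := hrep3 y.length hylow hyhigh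
  unfold RepresentsAt at hre
  have hmem : y ∈ {l : List Bool | l.length = y.length ∧ ∃ x ∈ X, x <+: l} := by
    rw [← hre]
    exact ⟨rfl, hyA⟩
  exact ⟨y, hyDom, Or.inl hmem.2⟩
end

section
/- For every optimal prefix-free decompressor D there exists n₀ such that for every n ≥ n₀ the domain of D contains a string p with n ≤ length(p) ≤ 2n. -/
open scoped Classical

/-- encode: unary half-length, marker, parity bit, payload -/
def enc (x : List Bool) : List Bool :=
  List.replicate (x.length / 2) false ++ true :: decide (x.length % 2 = 1) :: x

/-- decode -/
def dec (y : List Bool) : Option (List Bool) :=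
  if y.length = 3 * (y.idxOf true) + 2 +
      (if y.getD (y.idxOf true + 1) false = true then 1 else 0)
  then some (y.drop (y.idxOf true + 2)) else none

lemma indexOf_enc (q : ℕ) (r : List Bool) :
    (List.replicate q false ++ true :: r).idxOf true = q := by
  induction q with
  | zero => simp [List.idxOf_cons_self]
  | succ n ih =>
      simp only [List.replicate_succ, List.cons_append]
      rw [List.idxOf_cons_ne _ (by simp)]
      simp [ih]

lemma getD_enc (q : ℕ) (p : Bool) (r : List Bool) :
    (List.replicate q false ++ true :: p :: r).getD (q + 1) false = p := by
  induction q with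
  | zero => simp [List.getD]
  | succ n ih =>
      simp only [List.replicate_succ, List.cons_append]
      rw [show n + 1 + 1 = (n+1) + 1 from rfl]
      simpa [List.getD_cons_succ] using ih

lemma drop_enc (q : ℕ) (p : Bool) (r : List Bool) :
    (List.replicate q false ++ true :: p :: r).drop (q + 2) = r := by
  induction q with
  | zero => simp
  | succ n ih =>
      simp only [List.replicate_succ, List.cons_append]
      simpa [List.drop_succ_cons] using ih

lemma dec_enc (x : List Bool) : dec (enc x) = some x := by
  have hm := Nat.div_add_mod x.length 2
  have hr : x.length % 2 < 2 := Nat.mod_lt _ (by norm_num)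
  unfold dec enc
  rw [indexOf_enc, getD_enc, drop_enc]
  have hlen : (List.replicate (x.length / 2) false ++
      true :: decide (x.length % 2 = 1) :: x).length
      = 3 * (x.length / 2) + 2 + (if decide (x.length % 2 = 1) = true then 1 else 0) := by
    simp only [List.length_append, List.length_replicate, List.length_cons]
    interval_cases h : x.length % 2 <;> simp_all <;> omega
  rw [if_pos hlen]

lemma dec_spec {y : List Bool} {x : List Bool} (h : dec y = some x) :
    y.length = 3 * (y.idxOf true) + 2 +
      (if y.getD (y.idxOf true + 1) false = true then 1 else 0) := by
  unfold dec at h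
  by_contra hc
  rw [if_neg hc] at h
  exact absurd h (by simp)

lemma dec_prefixFree {y z x x' : List Bool}
    (h : dec y = some x) (h' : dec (y ++ z) = some x') : z = [] := by
  have hy := dec_spec h
  have hyz := dec_spec h'
  set k := y.idxOf true with hk
  set p := (if y.getD (k + 1) false = true then 1 else 0) with hp
  have hple : p ≤ 1 := by rw [hp]; split <;> omega
  have hmem : true ∈ y := by
    by_contra hnm
    have := List.idxOf_eq_length hnm
    omega
  have hkk : (y ++ z).idxOf true = k := List.idxOf_append_of_mem hmem
  have hklt : k + 1 < y.length := by omega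
  have hgd : (y ++ z).getD (k + 1) false = y.getD (k + 1) false :=
    List.getD_append _ _ _ _ hklt
  rw [hkk, hgd, List.length_append, ← hp] at hyz
  have : z.length = 0 := by omega
  exact List.length_eq_zero_iff.mp this

lemma tail_iterate_eq_drop : ∀ (n : ℕ) (l : List Bool), List.tail^[n] l = l.drop n := by
  intro n
  induction n with
  | zero => intro l; simp
  | succ m ih =>
      intro l
      rw [Function.iterate_succ_apply, ih]
      cases l <;> simp

lemma primrec_dec : Primrec dec := by
  have hk : Primrec fun y : List Bool => y.idxOf true :=
    Primrec.list_idxOf.comp (Primrec.const true) Primrec.id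
  have hgd : Primrec fun y : List Bool => y.getD (y.idxOf true + 1) false :=
    (Primrec.list_getD false).comp Primrec.id (Primrec.succ.comp hk)
  have hp : Primrec fun y : List Bool =>
      (if y.getD (y.idxOf true + 1) false = true then 1 else 0 : ℕ) :=
    Primrec.ite (Primrec.eq.comp hgd (Primrec.const true)) (Primrec.const 1) (Primrec.const 0)
  have hdrop : Primrec fun y : List Bool => y.drop (y.idxOf true + 2) := by
    have h := Primrec.nat_iterate (f := fun y : List Bool => y.idxOf true + 2)
      (g := @id (List Bool)) (h := fun (_ : List Bool) (l : List Bool) => l.tail)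
      (Primrec.succ.comp (Primrec.succ.comp hk)) Primrec.id
      (Primrec.list_tail.comp Primrec.snd)
    exact h.of_eq fun y => tail_iterate_eq_drop _ _
  have hcond : PrimrecPred fun y : List Bool =>
      y.length = 3 * y.idxOf true + 2 +
        (if y.getD (y.idxOf true + 1) false = true then 1 else 0) :=
    Primrec.eq.comp Primrec.list_length
      (Primrec.nat_add.comp
        (Primrec.nat_add.comp (Primrec.nat_mul.comp (Primrec.const 3) hk) (Primrec.const 2)) hp)
  exact (Primrec.ite hcond (Primrec.option_some.comp hdrop) (Primrec.const none)).of_eq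
    fun y => by unfold dec; congr

/-- All boolean strings of length `n`, as a finset. -/
def allB : ℕ → Finset (List Bool)
  | 0 => {[]}
  | n + 1 => (allB n).image (List.cons false) ∪ (allB n).image (List.cons true)

lemma mem_allB : ∀ (n : ℕ) (y : List Bool), y ∈ allB n ↔ y.length = n := by
  intro n
  induction n with
  | zero => intro y; cases y <;> simp [allB]
  | succ m ih =>
      intro y
      cases y with
      | nil => simp [allB]
      | cons a t =>
          simp only [allB, Finset.mem_union, Finset.mem_image, ih, List.length_cons]
          constructor
          · rintro (⟨l, hl, he⟩ | ⟨l, hl, he⟩) <;> (cases he; omega)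
          · intro h
            cases a
            · exact Or.inl ⟨t, by omega, rfl⟩
            · exact Or.inr ⟨t, by omega, rfl⟩

lemma card_allB : ∀ n : ℕ, (allB n).card = 2 ^ n := by
  intro n
  induction n with
  | zero => simp [allB]
  | succ m ih =>
      have hdisj : Disjoint ((allB m).image (List.cons false))
          ((allB m).image (List.cons true)) := by
        rw [Finset.disjoint_left]
        rintro a ha hb
        simp only [Finset.mem_image] at ha hb
        obtain ⟨l, -, rfl⟩ := ha
        obtain ⟨l', -, he⟩ := hb
        exact Bool.noConfusion (List.head_eq_of_cons_eq he)
      have hinj : ∀ b : Bool, Function.Injective (List.cons b) := by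
        intro b l l' h; exact List.tail_eq_of_cons_eq h
      rw [allB, Finset.card_union_of_disjoint hdisj,
        Finset.card_image_of_injective _ (hinj false),
        Finset.card_image_of_injective _ (hinj true), ih]
      ring

lemma sum_pow_two (n : ℕ) : (∑ i ∈ Finset.range n, 2 ^ i) = 2 ^ n - 1 := by
  induction n with
  | zero => simp
  | succ m ih =>
      rw [Finset.sum_range_succ, ih]
      have : 1 ≤ 2 ^ m := Nat.one_le_two_pow
      omega

/-- For each n there is a string of length n all of whose D-descriptions
have length at least n. -/
lemma exists_hard (D : List Bool →. List Bool) (n : ℕ) :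
    ∃ x : List Bool, x.length = n ∧ ∀ y : List Bool, x ∈ D y → n ≤ y.length := by
  by_contra hcon
  push_neg at hcon
  choose! f hf1 hf2 using hcon
  have hmaps : ∀ x ∈ allB n, f x ∈ (Finset.range n).biUnion allB := by
    intro x hx
    have hx' := (mem_allB n x).mp hx
    exact Finset.mem_biUnion.mpr ⟨(f x).length,
      Finset.mem_range.mpr (hf2 x hx'), (mem_allB _ _).mpr rfl⟩
  have hinj : Set.InjOn f (allB n) := by
    intro x hx x' hx' he
    have h1 := hf1 x ((mem_allB n x).mp hx)
    have h2 := hf1 x' ((mem_allB n x').mp hx')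
    rw [he] at h1
    exact Part.mem_unique h1 h2
  have hcard := Finset.card_le_card_of_injOn f hmaps hinj
  have hbu : ((Finset.range n).biUnion allB).card ≤ 2 ^ n - 1 := by
    calc ((Finset.range n).biUnion allB).card
        ≤ ∑ i ∈ Finset.range n, (allB i).card := Finset.card_biUnion_le
      _ = 2 ^ n - 1 := by simp_rw [card_allB]; exact sum_pow_two n
  rw [card_allB] at hcard
  have : 1 ≤ 2 ^ n := Nat.one_le_two_pow
  omega

theorem stmt11 (D : List Bool →. List Bool) (hD : OptimalPrefix D) :
    ∃ n₀ : ℕ, ∀ n : ℕ, n₀ ≤ n →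
      ∃ p ∈ D.Dom, n ≤ p.length ∧ p.length ≤ 2 * n := by
  obtain ⟨hDpart, hDpf, hopt⟩ := hD
  set D' : List Bool →. List Bool := fun y => (dec y : Part (List Bool)) with hD'def
  have hD'part : Partrec D' := Computable.ofOption primrec_dec.to_comp
  have hD'pf : PrefixFreeSet D'.Dom := by
    intro p hp q hq hpre
    obtain ⟨z, rfl⟩ := hpre
    rw [PFun.mem_dom] at hp hq
    obtain ⟨x, hx⟩ := hp
    obtain ⟨x', hx'⟩ := hq
    have h1 : dec p = some x := by
      simpa [hD'def, Part.mem_ofOption, Option.mem_def] using hx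
    have h2 : dec (p ++ z) = some x' := by
      simpa [hD'def, Part.mem_ofOption, Option.mem_def] using hx'
    have hz := dec_prefixFree h1 h2
    simp [hz]
  obtain ⟨c, hc⟩ := hopt D' hD'part hD'pf
  refine ⟨2 * c + 4, fun n hn => ?_⟩
  obtain ⟨x, hxlen, hxhard⟩ := exists_hard D n
  have hxmem : x ∈ D' (enc x) := by
    simp [hD'def, Part.mem_ofOption, Option.mem_def, dec_enc]
  have hup1 : Cpx D' x ≤ ((enc x).length : ℕ∞) := sInf_le ⟨enc x, hxmem, rfl⟩
  have henclen : (enc x).length = n / 2 + (2 + n) := by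
    simp [enc, hxlen]; omega
  have hup : Cpx D x ≤ ((2 * n : ℕ) : ℕ∞) := by
    calc Cpx D x ≤ Cpx D' x + (c : ℕ∞) := hc x
      _ ≤ ((enc x).length : ℕ∞) + (c : ℕ∞) := add_le_add_left hup1 _
      _ = (((enc x).length + c : ℕ) : ℕ∞) := by push_cast; ring
      _ ≤ ((2 * n : ℕ) : ℕ∞) := by
          rw [Nat.cast_le]
          omega
  by_contra hno
  push_neg at hno
  have hlow : ((2 * n + 1 : ℕ) : ℕ∞) ≤ Cpx D x := by
    apply le_sInf
    rintro s ⟨y, hy, rfl⟩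
    have hydom : y ∈ D.Dom := (PFun.mem_dom D y).mpr ⟨x, hy⟩
    have h1 : n ≤ y.length := hxhard y hy
    have h2 : 2 * n < y.length := hno y hydom h1
    exact_mod_cast Nat.succ_le_of_lt h2
  have hfin : (2 * n + 1 : ℕ) ≤ 2 * n := by exact_mod_cast hlow.trans hup
  omega
end

section
/- There exists an optimal plain decompressor U and binary strings s ≠ t such that s has exactly one U-description p_s (i.e., p_s is the unique string with U(p_s) = s), t has exactly one U-description p_t, and p_s is a proper prefix of p_t. -/
open scoped Classical

section Stmt14Aux

open Nat.Partrec (Code)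
open Encodable

/-- Parse a string of the form `true^e ++ false :: z` into `(e, encode z)`. -/
def stmt14pre (y : List Bool) : Option (ℕ × ℕ) :=
  if y.idxOf false < y.length then
    some (y.idxOf false, Encodable.encode (y.drop (y.idxOf false + 1)))
  else none

/-- Postprocess: decode output, rejecting the two reserved strings. -/
def stmt14post (m : ℕ) : Option (List Bool) :=
  (Encodable.decode (α := List Bool) m).bind fun x =>
    if x = [false] ∨ x = [true] then none else some x

noncomputable def stmt14U : List Bool →. List Bool := fun y =>
  bif decide (y = []) then Part.some [false]
  else bif decide (y = [true]) then Part.some [true]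
  else (Part.ofOption (stmt14pre y)).bind fun p =>
    (Nat.Partrec.Code.eval (Denumerable.ofNat Nat.Partrec.Code p.1) p.2).bind fun m =>
      Part.ofOption (stmt14post m)

theorem stmt14drop_iterate : ∀ (n : ℕ) (l : List Bool), l.drop n = List.tail^[n] l := by
  intro n
  induction n with
  | zero => intro l; simp
  | succ n ih =>
    intro l
    cases l with
    | nil => simp [Function.iterate_fixed, List.tail]; exact Function.iterate_fixed rfl n
    | cons a l => rw [List.drop_succ_cons, Function.iterate_succ_apply]; simpa using ih l

theorem stmt14pre_computable : Computable stmt14pre := by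
  have hidx : Primrec fun y : List Bool => y.idxOf false :=
    Primrec.list_idxOf.comp (Primrec.const false) Primrec.id
  have hdrop : Primrec fun y : List Bool => y.drop (y.idxOf false + 1) := by
    have : Primrec fun y : List Bool => (List.tail)^[y.idxOf false + 1] y :=
      Primrec.nat_iterate (Primrec.succ.comp hidx) Primrec.id
        (Primrec.list_tail.comp Primrec.snd).to₂
    exact this.of_eq fun y => (stmt14drop_iterate _ _).symm
  have : Primrec stmt14pre := by
    unfold stmt14pre
    exact Primrec.ite (Primrec.nat_lt.comp hidx Primrec.list_length)
      (Primrec.option_some.comp (hidx.pair (Primrec.encode.comp hdrop)))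
      (Primrec.const none)
  exact this.to_comp

theorem stmt14post_computable : Computable stmt14post := by
  have : Primrec stmt14post := by
    unfold stmt14post
    exact Primrec.option_bind Primrec.decode
      (Primrec.ite
        ((Primrec.eq.comp Primrec.snd (Primrec.const [false])).or
          (Primrec.eq.comp Primrec.snd (Primrec.const [true])))
        (Primrec.const none)
        (Primrec.option_some.comp Primrec.snd)).to₂
  exact this.to_comp

theorem stmt14U_partrec : Partrec stmt14U := by
  have hmain : Partrec fun y : List Bool =>
      (Part.ofOption (stmt14pre y)).bind fun p =>
        (Nat.Partrec.Code.eval (Denumerable.ofNat Nat.Partrec.Code p.1) p.2).bind fun m =>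
          Part.ofOption (stmt14post m) := by
    apply Partrec.bind (Computable.ofOption stmt14pre_computable)
    apply Partrec.bind
    · exact Nat.Partrec.Code.eval_part.comp
        ((Primrec.ofNat Code).to_comp.comp (Computable.fst.comp Computable.snd))
        (Computable.snd.comp Computable.snd)
    · exact (Computable.ofOption (stmt14post_computable.comp Computable.snd)).to₂
  have h1 : Computable fun y : List Bool => decide (y = []) :=
    (Primrec.eq.comp Primrec.id (Primrec.const [])).decide.to_comp
  have h2 : Computable fun y : List Bool => decide (y = [true]) :=
    (Primrec.eq.comp Primrec.id (Primrec.const [true])).decide.to_comp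
  exact Partrec.cond h1 ((Computable.const [false]).partrec)
    (Partrec.cond h2 ((Computable.const [true]).partrec) hmain)

theorem stmt14U_main {y : List Bool} (h1 : y ≠ []) (h2 : y ≠ [true]) :
    stmt14U y = (Part.ofOption (stmt14pre y)).bind fun p =>
      (Nat.Partrec.Code.eval (Denumerable.ofNat Nat.Partrec.Code p.1) p.2).bind fun m =>
        Part.ofOption (stmt14post m) := by
  simp [stmt14U, h1, h2]

theorem stmt14_mem_main {x y : List Bool} (h1 : y ≠ []) (h2 : y ≠ [true])
    (hx : x ∈ stmt14U y) : x ≠ [false] ∧ x ≠ [true] := by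
  rw [stmt14U_main h1 h2] at hx
  rcases Part.mem_bind_iff.1 hx with ⟨p, -, hp⟩
  rcases Part.mem_bind_iff.1 hp with ⟨m, -, hm⟩
  rw [Part.mem_ofOption] at hm
  unfold stmt14post at hm
  rcases Option.bind_eq_some_iff.1 hm with ⟨x', -, hx'⟩
  by_cases hc : x' = [false] ∨ x' = [true]
  · simp [hc] at hx'
  · simp only [hc, if_false, Option.some.injEq] at hx'
    subst hx'
    push_neg at hc
    exact hc

theorem stmt14_indexOf (e : ℕ) (z : List Bool) :
    (List.replicate e true ++ false :: z).idxOf false = e := by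
  induction e with
  | zero => simp
  | succ e ih =>
    rw [List.replicate_succ, List.cons_append, List.idxOf_cons_ne _ (by simp)]
    simp [ih]

theorem stmt14_drop (e : ℕ) (z : List Bool) :
    (List.replicate e true ++ false :: z).drop (e + 1) = z := by
  have : List.replicate e true ++ false :: z = (List.replicate e true ++ [false]) ++ z := by
    simp
  rw [this, List.drop_left' (by simp)]

theorem stmt14_pre_eval (e : ℕ) (z : List Bool) :
    stmt14pre (List.replicate e true ++ false :: z) = some (e, Encodable.encode z) := by
  have hlen : (List.replicate e true ++ false :: z).length = e + 1 + z.length := by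
    simp; omega
  unfold stmt14pre
  rw [stmt14_indexOf, stmt14_drop]
  rw [if_pos (by omega)]

/-- Membership in `stmt14U` for the main branch. -/
theorem stmt14_mem_of (e : ℕ) (z x : List Bool) (hx1 : x ≠ [false]) (hx2 : x ≠ [true])
    (hev : (Encodable.encode x : ℕ) ∈
      Nat.Partrec.Code.eval (Denumerable.ofNat Nat.Partrec.Code e) (Encodable.encode z)) :
    x ∈ stmt14U (List.replicate e true ++ false :: z) := by
  set y := List.replicate e true ++ false :: z with hy
  have h1 : y ≠ [] := by simp [hy]
  have h2 : y ≠ [true] := by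
    intro h
    have : false ∈ y := by simp [hy]
    rw [h] at this
    simp at this
  rw [stmt14U_main h1 h2]
  refine Part.mem_bind_iff.2 ⟨(e, Encodable.encode z), ?_, ?_⟩
  · rw [Part.mem_ofOption, stmt14_pre_eval]; rfl
  · refine Part.mem_bind_iff.2 ⟨Encodable.encode x, hev, ?_⟩
    rw [Part.mem_ofOption]
    unfold stmt14post
    have : (Encodable.decode (α := List Bool) (Encodable.encode x)) = some x :=
      Encodable.encodek x
    rw [this]
    simp [hx1, hx2]

theorem stmt14_s_iff (y : List Bool) : [false] ∈ stmt14U y ↔ y = [] := by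
  constructor
  · intro h
    by_cases h1 : y = []
    · exact h1
    by_cases h2 : y = [true]
    · subst h2
      simp [stmt14U, Part.mem_some_iff] at h
    · exact absurd rfl (stmt14_mem_main h1 h2 h).1
  · rintro rfl
    simp [stmt14U, Part.mem_some_iff]

theorem stmt14_t_iff (y : List Bool) : [true] ∈ stmt14U y ↔ y = [true] := by
  constructor
  · intro h
    by_cases h1 : y = []
    · subst h1
      simp [stmt14U, Part.mem_some_iff] at h
    by_cases h2 : y = [true]
    · exact h2
    · exact absurd rfl (stmt14_mem_main h1 h2 h).2
  · rintro rfl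
    simp [stmt14U, Part.mem_some_iff]

end Stmt14Aux
theorem stmt14_Cpx_le {D : List Bool →. List Bool} {x y : List Bool} (h : x ∈ D y) :
    Cpx D x ≤ (y.length : ℕ∞) :=
  sInf_le ⟨y, h, rfl⟩

theorem stmt14U_optimal :
    Partrec stmt14U ∧ ∀ D : List Bool →. List Bool, Partrec D →
      ∃ c : ℕ, ∀ x : List Bool, Cpx stmt14U x ≤ Cpx D x + (c : ℕ∞) := by
  refine ⟨stmt14U_partrec, fun D hD => ?_⟩
  obtain ⟨cD, hcD⟩ := Nat.Partrec.Code.exists_code.1 hD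
  set e := Encodable.encode cD with he
  refine ⟨e + 2, fun x => ?_⟩
  by_cases hs : x = [false]
  · subst hs
    have : Cpx stmt14U [false] ≤ ((([] : List Bool)).length : ℕ∞) :=
      stmt14_Cpx_le ((stmt14_s_iff []).2 rfl)
    simpa using le_trans this zero_le
  by_cases ht : x = [true]
  · subst ht
    have h1 : Cpx stmt14U [true] ≤ (([true] : List Bool).length : ℕ∞) :=
      stmt14_Cpx_le ((stmt14_t_iff [true]).2 rfl)
    have h2 : (([true] : List Bool).length : ℕ∞) ≤ Cpx D [true] + ((e + 2 : ℕ) : ℕ∞) := by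
      calc (([true] : List Bool).length : ℕ∞) = (1 : ℕ) := by norm_num
      _ ≤ ((e + 2 : ℕ) : ℕ∞) := by exact_mod_cast Nat.one_le_iff_ne_zero.2 (by omega)
      _ ≤ Cpx D [true] + ((e + 2 : ℕ) : ℕ∞) := le_add_self
    exact le_trans h1 h2
  by_cases hdom : ∃ y, x ∈ D y
  · obtain ⟨y0, hy0⟩ := hdom
    set T := {k : ℕ | ∃ y, x ∈ D y ∧ y.length = k} with hT
    have hTne : T.Nonempty := ⟨y0.length, y0, hy0, rfl⟩
    obtain ⟨y, hy, hylen⟩ := Nat.sInf_mem hTne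
    have hev : (Encodable.encode x : ℕ) ∈ Nat.Partrec.Code.eval cD (Encodable.encode y) := by
      rw [hcD]
      refine Part.mem_bind_iff.2 ⟨y, ?_, ?_⟩
      · simp [Encodable.encodek]
      · exact Part.mem_map _ hy
    have hmem : x ∈ stmt14U (List.replicate e true ++ false :: y) :=
      stmt14_mem_of e y x hs ht (by rw [he, Denumerable.ofNat_encode]; exact hev)
    have hlen : (List.replicate e true ++ false :: y).length = sInf T + (e + 1) := by
      simp [hylen]; omega
    have hU : Cpx stmt14U x ≤ ((sInf T + (e + 1) : ℕ) : ℕ∞) := by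
      have := stmt14_Cpx_le hmem
      rwa [hlen] at this
    have hN : ((sInf T : ℕ) : ℕ∞) ≤ Cpx D x := by
      refine le_sInf fun n hn => ?_
      rcases hn with ⟨z, hz, rfl⟩
      exact_mod_cast Nat.sInf_le (show z.length ∈ T from ⟨z, hz, rfl⟩)
    calc Cpx stmt14U x ≤ ((sInf T + (e + 1) : ℕ) : ℕ∞) := hU
      _ ≤ ((sInf T : ℕ) : ℕ∞) + ((e + 2 : ℕ) : ℕ∞) := by
          rw [← Nat.cast_add]; exact_mod_cast (by omega : sInf T + (e + 1) ≤ sInf T + (e + 2))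
      _ ≤ Cpx D x + ((e + 2 : ℕ) : ℕ∞) := add_le_add_left hN _
  · have : {n : ℕ∞ | ∃ y : List Bool, x ∈ D y ∧ (y.length : ℕ∞) = n} = ∅ := by
      push_neg at hdom
      ext n; simp only [Set.mem_setOf_eq, Set.mem_empty_iff_false, iff_false]
      rintro ⟨y, hy, -⟩; exact hdom y hy
    have : Cpx D x = ⊤ := by rw [Cpx, this, sInf_empty]
    rw [this, top_add]
    exact le_top


theorem stmt14 :
    ∃ U : List Bool →. List Bool, OptimalPlain U ∧
      ∃ s t pₛ pₜ : List Bool, s ≠ t ∧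
        (∀ y : List Bool, s ∈ U y ↔ y = pₛ) ∧
        (∀ y : List Bool, t ∈ U y ↔ y = pₜ) ∧
        pₛ <+: pₜ ∧ pₛ ≠ pₜ := by
  exact ⟨stmt14U, stmt14U_optimal, [false], [true], [], [true], by simp,
    stmt14_s_iff, stmt14_t_iff, List.nil_prefix, by simp⟩
end

section
/- There exists an optimal plain decompressor U such that no restriction of U is an optimal prefix-free decompressor: for every partial computable V : List Bool →. List Bool whose domain is a prefix-free subset of the domain of U and which agrees with U on its domain, V is not an optimal prefix-free decompressor. -/
open scoped Classical

namespace Stmt15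

open Nat.Partrec (Code)
open Nat.Partrec.Code
open Encodable

def Astr : List Bool := []
def Bstr : List Bool := [false]

def mainVal (z : List Bool) : Part (List Bool) :=
  ((Denumerable.ofNat Code (z.idxOf true)).eval (encode (z.drop (z.idxOf true + 1)))).bind
    fun m => Part.ofOption (decode (α := List Bool) m)

def U : List Bool →. List Bool := fun p =>
  if p.head? = some false then
    (mainVal p.tail).bind fun v => Part.ofOption (if v = Astr ∨ v = Bstr then none else some v)
  else
    Part.ofOption (if p.head? = some true ∧ p.tail.idxOf true = p.tail.length
      then some (if p.tail.length % 2 = 0 then Astr else Bstr) else none)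

lemma mem_U_false {z x : List Bool} (h : x ∈ mainVal z) (hA : x ≠ Astr) (hB : x ≠ Bstr) :
    x ∈ U (false :: z) := by
  unfold U
  simp only [List.head?_cons, List.tail_cons, if_pos]
  refine Part.mem_bind_iff.mpr ⟨x, h, ?_⟩
  rw [if_neg (by tauto)]
  simp [Part.mem_ofOption]

lemma mem_U_true (k : ℕ) :
    (if k % 2 = 0 then Astr else Bstr) ∈ U (true :: List.replicate k false) := by
  unfold U
  simp only [List.head?_cons, List.tail_cons]
  rw [if_neg (by simp)]
  have hidx : (List.replicate k false).idxOf true = (List.replicate k false).length :=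
    List.idxOf_eq_length_iff.mpr (by simp [List.mem_replicate])
  simp [Part.mem_ofOption, hidx]

lemma U_trap_inv {p x : List Bool} (hx : x = Astr ∨ x = Bstr) (h : x ∈ U p) :
    ∃ k, p = true :: List.replicate k false ∧ x = (if k % 2 = 0 then Astr else Bstr) := by
  unfold U at h
  split_ifs at h with hh hcond hpar
  · exfalso
    obtain ⟨v, _, hx'⟩ := Part.mem_bind_iff.mp h
    rw [Part.mem_ofOption] at hx'
    split_ifs at hx' with hAB
    · simp at hx'
    · have hxv : x = v := by simpa using hx'.symm
      exact hAB (by rw [← hxv]; exact hx)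
  · obtain ⟨hhead, hidx⟩ := hcond
    obtain ⟨t, rfl⟩ : ∃ t, p = true :: t := by
      cases p with
      | nil => simp at hhead
      | cons a t => simp at hhead; exact ⟨t, by rw [hhead]⟩
    simp only [List.tail_cons] at hidx hpar h ⊢
    have ht : t = List.replicate t.length false := by
      have hmem : true ∉ t := List.idxOf_eq_length_iff.mp hidx
      exact List.eq_replicate_length.mpr fun b hb => by
        cases b
        · rfl
        · exact absurd hb hmem
    refine ⟨t.length, by rw [← ht], ?_⟩
    rw [if_pos hpar]
    simpa [Part.mem_ofOption] using h
  · obtain ⟨hhead, hidx⟩ := hcond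
    obtain ⟨t, rfl⟩ : ∃ t, p = true :: t := by
      cases p with
      | nil => simp at hhead
      | cons a t => simp at hhead; exact ⟨t, by rw [hhead]⟩
    simp only [List.tail_cons] at hidx hpar h ⊢
    have ht : t = List.replicate t.length false := by
      have hmem : true ∉ t := List.idxOf_eq_length_iff.mp hidx
      exact List.eq_replicate_length.mpr fun b hb => by
        cases b
        · rfl
        · exact absurd hb hmem
    refine ⟨t.length, by rw [← ht], ?_⟩
    rw [if_neg hpar]
    simpa [Part.mem_ofOption] using h
  · simp [Part.mem_ofOption] at h

lemma indexOf_spec (n : ℕ) (y : List Bool) :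
    (List.replicate n false ++ true :: y).idxOf true = n := by
  induction n with
  | zero => simp
  | succ n ih =>
    rw [List.replicate_succ, List.cons_append, List.idxOf_cons_ne _ (by simp), ih]

lemma drop_spec (n : ℕ) (y : List Bool) :
    (List.replicate n false ++ true :: y).drop (n + 1) = y := by
  induction n with
  | zero => simp
  | succ n ih => rw [List.replicate_succ, List.cons_append, List.drop_succ_cons, ih]

lemma cpx_le_length {D : List Bool →. List Bool} {x p : List Bool} (h : x ∈ D p) :
    Cpx D x ≤ (p.length : ℕ∞) :=
  sInf_le ⟨p, h, rfl⟩

lemma cpx_le_add {D E : List Bool →. List Bool} {x : List Bool} {k : ℕ}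
    (h : ∀ y, x ∈ D y → ∃ p, x ∈ E p ∧ p.length = y.length + k) :
    Cpx E x ≤ Cpx D x + (k : ℕ∞) := by
  rcases eq_top_or_lt_top (Cpx D x) with ht | ht
  · rw [ht]; simp
  obtain ⟨m, hm⟩ : ∃ m : ℕ, Cpx D x = (m : ℕ∞) := by
    obtain ⟨m, hm⟩ := WithTop.ne_top_iff_exists.mp ht.ne
    exact ⟨m, hm.symm⟩
  have hlt : sInf {n : ℕ∞ | ∃ y : List Bool, x ∈ D y ∧ (y.length : ℕ∞) = n} < (m : ℕ∞) + 1 := by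
    rw [show sInf {n : ℕ∞ | ∃ y : List Bool, x ∈ D y ∧ (y.length : ℕ∞) = n} = Cpx D x from rfl,
      hm]
    exact_mod_cast Nat.lt_succ_self m
  obtain ⟨n, ⟨y, hy, hn⟩, hnlt⟩ := sInf_lt_iff.mp hlt
  obtain ⟨p, hp, hlen⟩ := h y hy
  have hylen : y.length ≤ m := by
    rw [← hn] at hnlt
    have : ((y.length : ℕ) : ℕ∞) < ((m + 1 : ℕ) : ℕ∞) := by push_cast; exact_mod_cast hnlt
    exact Nat.lt_succ_iff.mp (by exact_mod_cast this)
  calc Cpx E x ≤ (p.length : ℕ∞) := cpx_le_length hp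
    _ = ((y.length + k : ℕ) : ℕ∞) := by rw [hlen]
    _ ≤ ((m + k : ℕ) : ℕ∞) := by exact_mod_cast Nat.add_le_add_right hylen k
    _ = Cpx D x + (k : ℕ∞) := by rw [hm]; push_cast; rfl

theorem U_partrec : Partrec U := by
  have hidx : Primrec fun z : List Bool => z.idxOf true :=
    Primrec.list_idxOf.comp (Primrec.const true) Primrec.id
  have hdrop : Primrec₂ fun (l : List Bool) (n : ℕ) => l.drop n := by
    have h := Primrec.nat_rec (f := fun l : List Bool => l)
      (g := fun (_ : List Bool) (p : ℕ × List Bool) => p.2.tail) Primrec.id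
      ((Primrec.list_tail.comp (Primrec.snd.comp Primrec.snd)).to₂)
    refine h.of_eq fun l n => ?_
    induction n with
    | zero => rfl
    | succ n ih => simp only [ih]; rw [List.tail_drop]
  have hcode : Computable fun z : List Bool => Denumerable.ofNat Code (z.idxOf true) :=
    (Computable.ofNat Code).comp hidx.to_comp
  have harg : Computable fun z : List Bool => encode (z.drop (z.idxOf true + 1)) :=
    Computable.encode.comp
      (hdrop.to_comp.comp Computable.id ((Primrec.succ.comp hidx).to_comp))
  have hmain : Partrec mainVal := by
    have hb : Partrec fun z : List Bool =>
        ((Denumerable.ofNat Code (z.idxOf true)).eval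
          (encode (z.drop (z.idxOf true + 1)))) :=
      Nat.Partrec.Code.eval_part.comp hcode harg
    have hdec : Partrec fun p : List Bool × ℕ => Part.ofOption (decode (α := List Bool) p.2) :=
      Computable.ofOption (Computable.decode.comp Computable.snd)
    exact hb.bind hdec
  have hb1 : Partrec fun p : List Bool =>
      (mainVal p.tail).bind fun v =>
        Part.ofOption (if v = Astr ∨ v = Bstr then none else some v) := by
    refine (hmain.comp Primrec.list_tail.to_comp).bind ?_
    apply Computable.ofOption
    have : Primrec fun q : List Bool × List Bool =>
        if q.2 = Astr ∨ q.2 = Bstr then (none : Option (List Bool)) else some q.2 :=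
      Primrec.ite
        (PrimrecPred.or (Primrec.eq.comp Primrec.snd (Primrec.const Astr))
          (Primrec.eq.comp Primrec.snd (Primrec.const Bstr)))
        (Primrec.const none) (Primrec.option_some.comp Primrec.snd)
    exact this.to_comp
  have hb2 : Computable fun p : List Bool =>
      (if p.head? = some true ∧ p.tail.idxOf true = p.tail.length
        then some (if p.tail.length % 2 = 0 then Astr else Bstr) else none) := by
    have : Primrec fun p : List Bool =>
        (if p.head? = some true ∧ p.tail.idxOf true = p.tail.length
          then some (if p.tail.length % 2 = 0 then Astr else Bstr) else none) := by
      refine Primrec.ite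
        (PrimrecPred.and (Primrec.eq.comp Primrec.list_head? (Primrec.const (some true)))
          (Primrec.eq.comp (hidx.comp Primrec.list_tail)
            (Primrec.list_length.comp Primrec.list_tail)))
        (Primrec.option_some.comp ?_) (Primrec.const none)
      exact Primrec.ite
        (Primrec.eq.comp
          (Primrec.nat_mod.comp (Primrec.list_length.comp Primrec.list_tail) (Primrec.const 2))
          (Primrec.const 0))
        (Primrec.const Astr) (Primrec.const Bstr)
    exact this.to_comp
  have hcond : Primrec fun p : List Bool => decide (p.head? = some false) :=
    (PrimrecPred.comp (Primrec.eq.comp Primrec.id (Primrec.const (some false))) Primrec.list_head?).decide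
  have h := Partrec.cond hcond.to_comp hb1 (Computable.ofOption hb2)
  refine h.of_eq fun p => ?_
  by_cases hp : p.head? = some false <;> simp [U, hp]

theorem U_optimal : OptimalPlain U := by
  refine ⟨U_partrec, fun D hD => ?_⟩
  obtain ⟨cD, hc⟩ := Nat.Partrec.Code.exists_code.mp hD
  refine ⟨encode cD + 2, fun x => ?_⟩
  by_cases hx : x = Astr ∨ x = Bstr
  · have h2 : Cpx U x ≤ (2 : ℕ∞) := by
      rcases hx with h | h
      · subst h
        calc Cpx U Astr ≤ ((true :: List.replicate 0 false).length : ℕ∞) :=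
              cpx_le_length (by simpa using mem_U_true 0)
          _ ≤ 2 := by norm_num
      · subst h
        calc Cpx U Bstr ≤ ((true :: List.replicate 1 false).length : ℕ∞) :=
              cpx_le_length (by simpa using mem_U_true 1)
          _ ≤ 2 := by norm_num
    calc Cpx U x ≤ (2 : ℕ∞) := h2
      _ ≤ ((encode cD + 2 : ℕ) : ℕ∞) := by exact_mod_cast Nat.le_add_left 2 (encode cD)
      _ ≤ Cpx D x + ((encode cD + 2 : ℕ) : ℕ∞) := le_add_self
  · push_neg at hx
    apply cpx_le_add (k := encode cD + 2)
    intro y hy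
    refine ⟨false :: (List.replicate (encode cD) false ++ true :: y), ?_, ?_⟩
    · apply mem_U_false _ hx.1 hx.2
      unfold mainVal
      rw [indexOf_spec, drop_spec, Denumerable.ofNat_encode, hc]
      refine Part.mem_bind_iff.mpr ⟨encode x, ?_, by simp [Part.mem_ofOption, encodek]⟩
      refine Part.mem_bind_iff.mpr ⟨y, by simp [encodek], Part.mem_map _ hy⟩
    · simp only [List.length_cons, List.length_append, List.length_replicate]
      omega

def constD (x₀ : List Bool) : List Bool →. List Bool :=
  fun y => Part.ofOption (if y = [] then some x₀ else none)

lemma constD_partrec (x₀ : List Bool) : Partrec (constD x₀) := by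
  apply Computable.ofOption
  have : Primrec fun y : List Bool => if y = [] then some x₀ else none :=
    Primrec.ite (Primrec.eq.comp Primrec.id (Primrec.const []))
      (Primrec.const (some x₀)) (Primrec.const none)
  exact this.to_comp

lemma constD_pf (x₀ : List Bool) : PrefixFreeSet (constD x₀).Dom := by
  have hd : ∀ p, p ∈ (constD x₀).Dom → p = [] := by
    intro p hp
    by_contra h
    rw [PFun.mem_dom] at hp
    obtain ⟨y, hy⟩ := hp
    rw [constD] at hy
    simp only [if_neg h] at hy
    simp [Part.mem_ofOption] at hy
  intro p hp q hq _
  rw [hd p hp, hd q hq]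

lemma constD_cpx (x₀ : List Bool) : Cpx (constD x₀) x₀ ≤ 0 := by
  simpa using cpx_le_length (D := constD x₀) (p := [])
    (by simp [constD, Part.mem_ofOption])

lemma exists_desc {V : List Bool →. List Bool} {x₀ : List Bool}
    (hopt : ∀ D : List Bool →. List Bool, Partrec D → PrefixFreeSet D.Dom →
      ∃ c : ℕ, ∀ x : List Bool, Cpx V x ≤ Cpx D x + (c : ℕ∞)) :
    ∃ y, x₀ ∈ V y := by
  obtain ⟨c, hc⟩ := hopt (constD x₀) (constD_partrec x₀) (constD_pf x₀)
  have h1 : Cpx V x₀ ≤ (c : ℕ∞) := by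
    calc Cpx V x₀ ≤ Cpx (constD x₀) x₀ + c := hc x₀
      _ ≤ 0 + c := by gcongr; exact constD_cpx x₀
      _ = c := by simp
  by_contra hno
  push_neg at hno
  have hT : Cpx V x₀ = ⊤ := by
    rw [Cpx, show {n : ℕ∞ | ∃ y : List Bool, x₀ ∈ V y ∧ (y.length : ℕ∞) = n} = ∅ from by
      ext n
      simp only [Set.mem_setOf_eq, Set.mem_empty_iff_false, iff_false, not_exists]
      exact fun y hy => absurd hy.1 (hno y)]
    exact sInf_empty
  rw [hT] at h1
  exact absurd h1 (by simp)

end Stmt15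

theorem stmt15 :
    ∃ U : List Bool →. List Bool, OptimalPlain U ∧
      ∀ V : List Bool →. List Bool, Partrec V →
        V.Dom ⊆ U.Dom → PrefixFreeSet V.Dom →
        (∀ (p x : List Bool), x ∈ V p → x ∈ U p) →
        ¬ OptimalPrefix V := by
  refine ⟨Stmt15.U, Stmt15.U_optimal, fun V hV hdom hpf hagree hopt => ?_⟩
  obtain ⟨-, -, hopt⟩ := hopt
  obtain ⟨p, hpA⟩ := Stmt15.exists_desc (x₀ := Stmt15.Astr) hopt
  obtain ⟨q, hqB⟩ := Stmt15.exists_desc (x₀ := Stmt15.Bstr) hopt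
  obtain ⟨i, rfl, hiA⟩ := Stmt15.U_trap_inv (Or.inl rfl) (hagree _ _ hpA)
  obtain ⟨j, rfl, hjB⟩ := Stmt15.U_trap_inv (Or.inr rfl) (hagree _ _ hqB)
  have hi : i % 2 = 0 := by
    by_contra h
    rw [if_neg h] at hiA
    exact absurd hiA (by simp [Stmt15.Astr, Stmt15.Bstr])
  have hj : ¬ j % 2 = 0 := by
    intro h
    rw [if_pos h] at hjB
    exact absurd hjB (by simp [Stmt15.Astr, Stmt15.Bstr])
  have hne : i ≠ j := fun h => hj (h ▸ hi)
  have hcomp : (true :: List.replicate i false) <+: (true :: List.replicate j false) ∨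
      (true :: List.replicate j false) <+: (true :: List.replicate i false) := by
    rcases le_total i j with h | h
    · left
      refine ⟨List.replicate (j - i) false, ?_⟩
      rw [List.cons_append, ← List.replicate_add]
      congr 2
      omega
    · right
      refine ⟨List.replicate (i - j) false, ?_⟩
      rw [List.cons_append, ← List.replicate_add]
      congr 2
      omega
  have hpd : (true :: List.replicate i false) ∈ V.Dom := (PFun.mem_dom V _).mpr ⟨_, hpA⟩
  have hqd : (true :: List.replicate j false) ∈ V.Dom := (PFun.mem_dom V _).mpr ⟨_, hqB⟩
  have heq : (true :: List.replicate i false) = (true :: List.replicate j false) := by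
    rcases hcomp with h | h
    · exact hpf _ hpd _ hqd h
    · exact (hpf _ hqd _ hpd h).symm
  have hij : i = j := by simpa using heq
  exact hne hij
end
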